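/- arXiv:1106.5203 — 6 statements merged into one kernel-verified Lean document; each statement's English description precedes it below -/
import Mathlib

section
/- Fix an s-regular summation method. Suppose that for every datum (μ, U, A, φ) of the reduced rank-two commutator setting in which, moreover, φ coincides μ-almost everywhere with some continuous function on 𝕋, the net W₋(α) converges in the weak operator topology along atTop on E. Then for every datum (μ, U, A, φ) of the reduced rank-two commutator setting (with arbitrary real-valued φ ∈ L²(μ)), the net W₋(α) converges in the weak operator topology along atTop on E. -/
open MeasureTheory Filter Topology ComplexConjugate
open scoped ENNReal NNReal BoundedContinuousFunction

noncomputable section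

instance : MeasurableSpace Circle := borel Circle
instance : BorelSpace Circle := ⟨rfl⟩

/-- An s-regular summation method indexed by a linearly ordered set `E`:
nonnegative weights `p α n` with unit sum for each `α`, total variation
`Σₙ |p α n - p α (n+1)|` tending to `0` along `atTop`, and each weight
`p α n` tending to `0` along `atTop`. -/
structure SRegular (E : Type*) [LinearOrder E] where
  p : E → ℕ → ℝ
  nonneg : ∀ α n, 0 ≤ p α n
  hasSum_one : ∀ α, HasSum (p α) 1
  tendsto_variation : Tendsto (fun α => ∑' n, |p α n - p α (n + 1)|) atTop (𝓝 0)
  tendsto_eval : ∀ n, Tendsto (fun α => p α n) atTop (𝓝 0)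

/-- The future averaged wave operator `W₊(α) = Σₙ p_{α,n} U⁻ⁿ A Uⁿ`. -/
def Wplus {E : Type*} [LinearOrder E] {H : Type*} [NormedAddCommGroup H]
    [InnerProductSpace ℂ H] [CompleteSpace H]
    (S : SRegular E) (U : unitary (H →L[ℂ] H)) (A : H →L[ℂ] H) (α : E) : H →L[ℂ] H :=
  ∑' n : ℕ, S.p α n •
    (((U ^ (-(n : ℤ)) : unitary (H →L[ℂ] H)) : H →L[ℂ] H) ∘L A ∘L
      ((U ^ (n : ℤ) : unitary (H →L[ℂ] H)) : H →L[ℂ] H))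

/-- The past averaged wave operator `W₋(α) = Σₙ p_{α,n} Uⁿ A U⁻ⁿ`. -/
def Wminus {E : Type*} [LinearOrder E] {H : Type*} [NormedAddCommGroup H]
    [InnerProductSpace ℂ H] [CompleteSpace H]
    (S : SRegular E) (U : unitary (H →L[ℂ] H)) (A : H →L[ℂ] H) (α : E) : H →L[ℂ] H :=
  ∑' n : ℕ, S.p α n •
    (((U ^ (n : ℤ) : unitary (H →L[ℂ] H)) : H →L[ℂ] H) ∘L A ∘L
      ((U ^ (-(n : ℤ)) : unitary (H →L[ℂ] H)) : H →L[ℂ] H))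

/-- The constant function `1` as an element of `L²(μ)`. -/
def oneLp (μ : Measure Circle) [IsFiniteMeasure μ] : Lp ℂ 2 μ :=
  MemLp.toLp (fun _ => (1 : ℂ)) (memLp_const 1)

/-! ### Auxiliary material for the proof -/

namespace RedAux

local notation "⟪" x ", " y "⟫" => @inner ℂ _ _ x y

section UnitaryHelpers

variable {H : Type*} [NormedAddCommGroup H] [InnerProductSpace ℂ H] [CompleteSpace H]

lemma u_mul_apply (u v : unitary (H →L[ℂ] H)) (x : H) :
    ((u * v : unitary (H →L[ℂ] H)) : H →L[ℂ] H) x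
      = (u : H →L[ℂ] H) ((v : H →L[ℂ] H) x) := rfl

lemma u_one_apply (x : H) : ((1 : unitary (H →L[ℂ] H)) : H →L[ℂ] H) x = x := rfl

lemma u_inv_apply (u : unitary (H →L[ℂ] H)) (x : H) :
    ((u⁻¹ : unitary (H →L[ℂ] H)) : H →L[ℂ] H) ((u : H →L[ℂ] H) x) = x := by
  rw [← u_mul_apply, inv_mul_cancel, u_one_apply]

lemma inner_u_left (u : unitary (H →L[ℂ] H)) (x y : H) :
    ⟪(u : H →L[ℂ] H) x, y⟫ = ⟪x, ((u⁻¹ : unitary (H →L[ℂ] H)) : H →L[ℂ] H) y⟫ := by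
  have h1 : ((u⁻¹ : unitary (H →L[ℂ] H)) : H →L[ℂ] H)
      = ContinuousLinearMap.adjoint (u : H →L[ℂ] H) := by
    rw [← Unitary.star_eq_inv, Unitary.coe_star, ContinuousLinearMap.star_eq_adjoint]
  rw [h1, ContinuousLinearMap.adjoint_inner_right]

lemma u_norm_apply (u : unitary (H →L[ℂ] H)) (x : H) : ‖(u : H →L[ℂ] H) x‖ = ‖x‖ := by
  have h : ⟪(u : H →L[ℂ] H) x, (u : H →L[ℂ] H) x⟫ = ⟪x, x⟫ := by
    rw [inner_u_left, u_inv_apply]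
  have h2 := congrArg (fun c : ℂ => Real.sqrt (RCLike.re c)) h
  simpa only [← @norm_eq_sqrt_re_inner ℂ] using h2

lemma u_opNorm (u : unitary (H →L[ℂ] H)) : ‖(u : H →L[ℂ] H)‖ ≤ 1 :=
  ContinuousLinearMap.opNorm_le_bound _ zero_le_one fun x => by
    rw [u_norm_apply, one_mul]

lemma inner_u_zpow (u : unitary (H →L[ℂ] H)) (k : ℤ) (x y : H) :
    ⟪((u ^ k : unitary (H →L[ℂ] H)) : H →L[ℂ] H) x, y⟫
      = ⟪x, ((u ^ (-k) : unitary (H →L[ℂ] H)) : H →L[ℂ] H) y⟫ := by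
  rw [inner_u_left, zpow_neg]

end UnitaryHelpers

section WminusHelpers

variable {E : Type*} [LinearOrder E]
variable {H : Type*} [NormedAddCommGroup H] [InnerProductSpace ℂ H] [CompleteSpace H]

/-- The `n`-th term of the series defining `Wminus`. -/
def wterm (S : SRegular E) (U : unitary (H →L[ℂ] H)) (A : H →L[ℂ] H) (α : E) (n : ℕ) :
    H →L[ℂ] H :=
  S.p α n •
    (((U ^ (n : ℤ) : unitary (H →L[ℂ] H)) : H →L[ℂ] H) ∘L A ∘L
      ((U ^ (-(n : ℤ)) : unitary (H →L[ℂ] H)) : H →L[ℂ] H))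

lemma wminus_eq (S : SRegular E) (U : unitary (H →L[ℂ] H)) (A : H →L[ℂ] H) (α : E) :
    Wminus S U A α = ∑' n, wterm S U A α n := rfl

lemma wterm_norm_le (S : SRegular E) (U : unitary (H →L[ℂ] H)) (A : H →L[ℂ] H)
    (α : E) (n : ℕ) : ‖wterm S U A α n‖ ≤ S.p α n * ‖A‖ := by
  rw [wterm, norm_smul, Real.norm_eq_abs, abs_of_nonneg (S.nonneg α n)]
  refine mul_le_mul_of_nonneg_left ?_ (S.nonneg α n)
  calc ‖((U ^ (n : ℤ) : unitary (H →L[ℂ] H)) : H →L[ℂ] H) ∘L A ∘L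
        ((U ^ (-(n : ℤ)) : unitary (H →L[ℂ] H)) : H →L[ℂ] H)‖
      ≤ ‖((U ^ (n : ℤ) : unitary (H →L[ℂ] H)) : H →L[ℂ] H)‖ *
        ‖A ∘L ((U ^ (-(n : ℤ)) : unitary (H →L[ℂ] H)) : H →L[ℂ] H)‖ :=
        ContinuousLinearMap.opNorm_comp_le _ _
    _ ≤ 1 * (‖A‖ * ‖((U ^ (-(n : ℤ)) : unitary (H →L[ℂ] H)) : H →L[ℂ] H)‖) := by
        refine mul_le_mul (u_opNorm _) (ContinuousLinearMap.opNorm_comp_le _ _)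
          (norm_nonneg _) zero_le_one
    _ ≤ 1 * (‖A‖ * 1) := by
        refine mul_le_mul_of_nonneg_left ?_ zero_le_one
        exact mul_le_mul_of_nonneg_left (u_opNorm _) (norm_nonneg _)
    _ = ‖A‖ := by ring

lemma wterm_summable (S : SRegular E) (U : unitary (H →L[ℂ] H)) (A : H →L[ℂ] H) (α : E) :
    Summable (wterm S U A α) :=
  Summable.of_norm_bounded ((S.hasSum_one α).summable.mul_right ‖A‖)
    (wterm_norm_le S U A α)

lemma wminus_norm_le (S : SRegular E) (U : unitary (H →L[ℂ] H)) (A : H →L[ℂ] H) (α : E) :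
    ‖Wminus S U A α‖ ≤ ‖A‖ := by
  have hs : Summable fun n => ‖wterm S U A α n‖ :=
    Summable.of_nonneg_of_le (fun n => norm_nonneg _) (wterm_norm_le S U A α)
      ((S.hasSum_one α).summable.mul_right ‖A‖)
  rw [wminus_eq]
  refine le_trans (norm_tsum_le_tsum_norm hs) (le_trans (hs.tsum_le_tsum
    (wterm_norm_le S U A α) ((S.hasSum_one α).summable.mul_right ‖A‖)) ?_)
  rw [tsum_mul_right, (S.hasSum_one α).tsum_eq, one_mul]

lemma wminus_inner_eq (S : SRegular E) (U : unitary (H →L[ℂ] H)) (A : H →L[ℂ] H)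
    (α : E) (h₁ h₂ : H) :
    ⟪Wminus S U A α h₁, h₂⟫ = ∑' n, ⟪wterm S U A α n h₁, h₂⟫ := by
  have h0 : HasSum (wterm S U A α) (Wminus S U A α) := by
    rw [wminus_eq]; exact (wterm_summable S U A α).hasSum
  have h1 : HasSum (fun n => wterm S U A α n h₁) (Wminus S U A α h₁) := by
    have := h0.mapL (ContinuousLinearMap.apply ℂ H h₁)
    simpa using this
  have hcont : Continuous fun x : H => ⟪x, h₂⟫ := continuous_id.inner continuous_const
  have h2 := h1.map (AddMonoidHom.mk' (fun x : H => ⟪x, h₂⟫)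
    (fun a b => inner_add_left a b h₂)) hcont
  exact h2.tsum_eq.symm

lemma wterm_inner (S : SRegular E) (U : unitary (H →L[ℂ] H)) (A : H →L[ℂ] H)
    (α : E) (n : ℕ) (h₁ h₂ : H) :
    ⟪wterm S U A α n h₁, h₂⟫
      = (S.p α n : ℂ) *
        ⟪((U ^ (n : ℤ) : unitary (H →L[ℂ] H)) : H →L[ℂ] H)
          (A (((U ^ (-(n : ℤ)) : unitary (H →L[ℂ] H)) : H →L[ℂ] H) h₁)), h₂⟫ := by
  rw [wterm, ContinuousLinearMap.smul_apply]
  rw [RCLike.real_smul_eq_coe_smul (K := ℂ), inner_smul_left, RCLike.conj_ofReal]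
  rfl

end WminusHelpers

section LpCircle

lemma continuous_circle_coe : Continuous (fun z : Circle => (z : ℂ)) :=
  continuous_subtype_val

variable (μ : Measure Circle) [IsFiniteMeasure μ]

lemma indicator_ae_congr {K : Set Circle} (hK : MeasurableSet K) {g₁ g₂ : Circle → ℂ}
    (h : g₁ =ᵐ[μ.restrict K] g₂) : K.indicator g₁ =ᵐ[μ] K.indicator g₂ := by
  have h' := (ae_restrict_iff' hK).1 h
  filter_upwards [h'] with z hz
  by_cases hzK : z ∈ K
  · simp [Set.indicator_of_mem hzK, hz hzK]
  · simp [Set.indicator_of_notMem hzK]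

/-- Restriction `L²(μ) → L²(μ|_K)` as a linear map. -/
def restLM (K : Set Circle) : Lp ℂ 2 μ →ₗ[ℂ] Lp ℂ 2 (μ.restrict K) where
  toFun g := ((Lp.memLp g).restrict K).toLp (g : Circle → ℂ)
  map_add' g g' := by
    rw [← MemLp.toLp_add]
    exact MemLp.toLp_congr _ _ (ae_restrict_of_ae (Lp.coeFn_add g g'))
  map_smul' c g := by
    simp only [RingHom.id_apply]
    rw [← MemLp.toLp_const_smul]
    exact MemLp.toLp_congr _ _ (ae_restrict_of_ae (Lp.coeFn_smul c g))

lemma norm_restLM_apply_le (K : Set Circle) (g : Lp ℂ 2 μ) : ‖restLM μ K g‖ ≤ ‖g‖ := by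
  rw [show restLM μ K g = ((Lp.memLp g).restrict K).toLp (g : Circle → ℂ) from rfl,
    Lp.norm_toLp, Lp.norm_def]
  exact ENNReal.toReal_mono (Lp.eLpNorm_ne_top g) (eLpNorm_restrict_le _ _ _ _)

/-- Restriction `L²(μ) → L²(μ|_K)` as a continuous linear map. -/
def restL (K : Set Circle) : Lp ℂ 2 μ →L[ℂ] Lp ℂ 2 (μ.restrict K) :=
  (restLM μ K).mkContinuous 1 fun g => by
    rw [one_mul]; exact norm_restLM_apply_le μ K g

lemma restL_coe (K : Set Circle) (g : Lp ℂ 2 μ) :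
    (restL μ K g : Circle → ℂ) =ᵐ[μ.restrict K] (g : Circle → ℂ) :=
  MemLp.coeFn_toLp ((Lp.memLp g).restrict K)

lemma norm_restL_apply_le (K : Set Circle) (g : Lp ℂ 2 μ) : ‖restL μ K g‖ ≤ ‖g‖ :=
  norm_restLM_apply_le μ K g

/-- Extension by zero `L²(μ|_K) → L²(μ)` as a linear map. -/
def extLM (K : Set Circle) (hK : MeasurableSet K) :
    Lp ℂ 2 (μ.restrict K) →ₗ[ℂ] Lp ℂ 2 μ where
  toFun f := ((memLp_indicator_iff_restrict hK).2 (Lp.memLp f)).toLp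
    (K.indicator (f : Circle → ℂ))
  map_add' f f' := by
    rw [← MemLp.toLp_add]
    refine MemLp.toLp_congr _ _ ?_
    refine (indicator_ae_congr μ hK (Lp.coeFn_add f f')).trans ?_
    refine Eventually.of_forall fun z => ?_
    by_cases hzK : z ∈ K <;>
      simp [Set.indicator_of_mem, Set.indicator_of_notMem, hzK]
  map_smul' c f := by
    simp only [RingHom.id_apply]
    rw [← MemLp.toLp_const_smul]
    refine MemLp.toLp_congr _ _ ?_
    refine (indicator_ae_congr μ hK (Lp.coeFn_smul c f)).trans ?_
    refine Eventually.of_forall fun z => ?_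
    by_cases hzK : z ∈ K <;>
      simp [Set.indicator_of_mem, Set.indicator_of_notMem, hzK]

lemma norm_extLM_apply (K : Set Circle) (hK : MeasurableSet K) (f : Lp ℂ 2 (μ.restrict K)) :
    ‖extLM μ K hK f‖ = ‖f‖ := by
  rw [show extLM μ K hK f = ((memLp_indicator_iff_restrict hK).2 (Lp.memLp f)).toLp
      (K.indicator (f : Circle → ℂ)) from rfl,
    Lp.norm_toLp, eLpNorm_indicator_eq_eLpNorm_restrict hK, Lp.norm_def]

/-- Extension by zero `L²(μ|_K) → L²(μ)` as a continuous linear map. -/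
def extL (K : Set Circle) (hK : MeasurableSet K) : Lp ℂ 2 (μ.restrict K) →L[ℂ] Lp ℂ 2 μ :=
  (extLM μ K hK).mkContinuous 1 fun f => by
    rw [one_mul, norm_extLM_apply]

lemma extL_coe (K : Set Circle) (hK : MeasurableSet K) (f : Lp ℂ 2 (μ.restrict K)) :
    (extL μ K hK f : Circle → ℂ) =ᵐ[μ] K.indicator (f : Circle → ℂ) := by
  rw [extL, LinearMap.mkContinuous_apply]
  simp only [extLM, LinearMap.coe_mk, AddHom.coe_mk]
  exact MemLp.coeFn_toLp _

lemma norm_extL_apply (K : Set Circle) (hK : MeasurableSet K) (f : Lp ℂ 2 (μ.restrict K)) :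
    ‖extL μ K hK f‖ = ‖f‖ :=
  norm_extLM_apply μ K hK f

lemma inner_restL (K : Set Circle) (hK : MeasurableSet K) (g : Lp ℂ 2 μ)
    (f : Lp ℂ 2 (μ.restrict K)) :
    ⟪restL μ K g, f⟫ = ⟪g, extL μ K hK f⟫ := by
  rw [L2.inner_def, L2.inner_def]
  have e1 : ∫ z, ⟪(restL μ K g : Circle → ℂ) z, (f : Circle → ℂ) z⟫ ∂(μ.restrict K)
      = ∫ z, ⟪(g : Circle → ℂ) z, (f : Circle → ℂ) z⟫ ∂(μ.restrict K) := by
    refine integral_congr_ae ?_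
    filter_upwards [restL_coe μ K g] with z hz
    rw [hz]
  have e2 : ∫ z, ⟪(g : Circle → ℂ) z, (extL μ K hK f : Circle → ℂ) z⟫ ∂μ
      = ∫ z, K.indicator (fun z => ⟪(g : Circle → ℂ) z, (f : Circle → ℂ) z⟫) z ∂μ := by
    refine integral_congr_ae ?_
    filter_upwards [extL_coe μ K hK f] with z hz
    rw [hz]
    by_cases hzK : z ∈ K
    · simp [Set.indicator_of_mem hzK]
    · simp [Set.indicator_of_notMem hzK]
  rw [e1, e2, integral_indicator hK]

lemma restL_extL (K : Set Circle) (hK : MeasurableSet K) (f : Lp ℂ 2 (μ.restrict K)) :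
    restL μ K (extL μ K hK f) = f := by
  apply Lp.ext
  refine ((restL_coe μ K (extL μ K hK f)).trans
    (ae_restrict_of_ae (extL_coe μ K hK f))).trans ?_
  have h : ∀ᵐ z ∂(μ.restrict K), z ∈ K := ae_restrict_mem hK
  filter_upwards [h] with z hz
  simp [Set.indicator_of_mem hz]

lemma oneLp_coe : (oneLp μ : Circle → ℂ) =ᵐ[μ] fun _ => (1 : ℂ) :=
  MemLp.coeFn_toLp (memLp_const (1 : ℂ))

lemma restL_oneLp (K : Set Circle) :
    restL μ K (oneLp μ) = oneLp (μ.restrict K) := by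
  apply Lp.ext
  refine ((restL_coe μ K (oneLp μ)).trans
    (ae_restrict_of_ae (oneLp_coe μ))).trans ?_
  exact (oneLp_coe (μ.restrict K)).symm

/-! multiplication operators by unimodular continuous functions -/

variable (ν : Measure Circle) [IsFiniteMeasure ν]

lemma eLpNorm_circle_mul (w : Circle → Circle) (f : Circle → ℂ) :
    eLpNorm (fun z => ((w z : ℂ)) * f z) 2 ν = eLpNorm f 2 ν := by
  refine eLpNorm_congr_norm_ae (Eventually.of_forall fun z => ?_)
  rw [norm_mul]
  rw [show ‖((w z : ℂ))‖ = 1 from Circle.norm_coe (w z), one_mul]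

lemma memℒp_circle_mul (w : Circle → Circle) (hw : Continuous w) (f : Lp ℂ 2 ν) :
    MemLp (fun z => ((w z : ℂ)) * (f : Circle → ℂ) z) 2 ν := by
  refine ⟨((continuous_circle_coe.comp hw).aestronglyMeasurable).mul
    (Lp.aestronglyMeasurable f), ?_⟩
  rw [eLpNorm_circle_mul]
  exact (Lp.memLp f).2

/-- Multiplication by a unimodular continuous function, as a linear map on `L²(ν)`. -/
def mulLM (w : Circle → Circle) (hw : Continuous w) : Lp ℂ 2 ν →ₗ[ℂ] Lp ℂ 2 ν where
  toFun f := (memℒp_circle_mul ν w hw f).toLp _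
  map_add' f f' := by
    rw [← MemLp.toLp_add]
    refine MemLp.toLp_congr _ _ ?_
    filter_upwards [Lp.coeFn_add f f'] with z hz
    simp only [Pi.add_apply] at hz ⊢
    rw [hz]; ring
  map_smul' c f := by
    simp only [RingHom.id_apply]
    rw [← MemLp.toLp_const_smul]
    refine MemLp.toLp_congr _ _ ?_
    filter_upwards [Lp.coeFn_smul c f] with z hz
    simp only [Pi.smul_apply] at hz ⊢
    rw [hz]
    simp [smul_eq_mul]
    ring

lemma norm_mulLM_apply (w : Circle → Circle) (hw : Continuous w) (f : Lp ℂ 2 ν) :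
    ‖mulLM ν w hw f‖ = ‖f‖ := by
  rw [show mulLM ν w hw f = (memℒp_circle_mul ν w hw f).toLp
      (fun z => ((w z : ℂ)) * (f : Circle → ℂ) z) from rfl,
    Lp.norm_toLp, eLpNorm_circle_mul, Lp.norm_def]

/-- Multiplication by a unimodular continuous function, as a continuous linear map. -/
def mulL (w : Circle → Circle) (hw : Continuous w) : Lp ℂ 2 ν →L[ℂ] Lp ℂ 2 ν :=
  (mulLM ν w hw).mkContinuous 1 fun f => by rw [one_mul, norm_mulLM_apply]

lemma mulL_coe (w : Circle → Circle) (hw : Continuous w) (f : Lp ℂ 2 ν) :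
    (mulL ν w hw f : Circle → ℂ) =ᵐ[ν] fun z => ((w z : ℂ)) * (f : Circle → ℂ) z :=
  MemLp.coeFn_toLp (memℒp_circle_mul ν w hw f)

/-- Multiplication by `z`. -/
def mulZL : Lp ℂ 2 ν →L[ℂ] Lp ℂ 2 ν := mulL ν (fun z => z) continuous_id

/-- Multiplication by `z⁻¹`. -/
def mulZInvL : Lp ℂ 2 ν →L[ℂ] Lp ℂ 2 ν := mulL ν (fun z => z⁻¹) (continuous_id.inv)

lemma mulZL_coe (f : Lp ℂ 2 ν) :
    (mulZL ν f : Circle → ℂ) =ᵐ[ν] fun z => (z : ℂ) * (f : Circle → ℂ) z :=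
  mulL_coe ν _ _ f

lemma mulZInvL_coe (f : Lp ℂ 2 ν) :
    (mulZInvL ν f : Circle → ℂ) =ᵐ[ν] fun z => ((z⁻¹ : Circle) : ℂ) * (f : Circle → ℂ) z :=
  mulL_coe ν _ _ f

lemma mulZInv_mulZ (f : Lp ℂ 2 ν) : mulZInvL ν (mulZL ν f) = f := by
  apply Lp.ext
  filter_upwards [mulZInvL_coe ν (mulZL ν f), mulZL_coe ν f] with z h1 h2
  rw [h1, h2, ← mul_assoc, ← Circle.coe_mul, inv_mul_cancel, Circle.coe_one, one_mul]

lemma mulZ_mulZInv (f : Lp ℂ 2 ν) : mulZL ν (mulZInvL ν f) = f := by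
  apply Lp.ext
  filter_upwards [mulZL_coe ν (mulZInvL ν f), mulZInvL_coe ν f] with z h1 h2
  rw [h1, h2, ← mul_assoc, ← Circle.coe_mul, mul_inv_cancel, Circle.coe_one, one_mul]

lemma inner_mulZ (x y : Lp ℂ 2 ν) : ⟪mulZInvL ν x, y⟫ = ⟪x, mulZL ν y⟫ := by
  rw [L2.inner_def, L2.inner_def]
  refine integral_congr_ae ?_
  filter_upwards [mulZInvL_coe ν x, mulZL_coe ν y] with z h1 h2
  rw [h1, h2, RCLike.inner_apply, RCLike.inner_apply, map_mul, Circle.coe_inv_eq_conj,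
    Complex.conj_conj]
  ring

/-- Multiplication by `z` as a unitary operator on `L²(ν)`. -/
def mulZU : unitary (Lp ℂ 2 ν →L[ℂ] Lp ℂ 2 ν) := by
  refine ⟨mulZL ν, ?_, ?_⟩
  · have hstar : star (mulZL ν) = mulZInvL ν := by
      rw [ContinuousLinearMap.star_eq_adjoint]
      exact ((ContinuousLinearMap.eq_adjoint_iff (mulZInvL ν) (mulZL ν)).2
        (inner_mulZ ν)).symm
    rw [hstar]
    exact ContinuousLinearMap.ext fun f => by
      rw [ContinuousLinearMap.mul_apply, mulZInv_mulZ, ContinuousLinearMap.one_apply]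
  · have hstar : star (mulZL ν) = mulZInvL ν := by
      rw [ContinuousLinearMap.star_eq_adjoint]
      exact ((ContinuousLinearMap.eq_adjoint_iff (mulZInvL ν) (mulZL ν)).2
        (inner_mulZ ν)).symm
    rw [hstar]
    exact ContinuousLinearMap.ext fun f => by
      rw [ContinuousLinearMap.mul_apply, mulZ_mulZInv, ContinuousLinearMap.one_apply]

lemma mulZU_coe (h : Lp ℂ 2 ν) :
    (((mulZU ν : unitary (Lp ℂ 2 ν →L[ℂ] Lp ℂ 2 ν)) : Lp ℂ 2 ν →L[ℂ] Lp ℂ 2 ν) h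
        : Circle → ℂ)
      =ᵐ[ν] fun z => (z : ℂ) * (h : Circle → ℂ) z :=
  mulZL_coe ν h

end LpCircle

end RedAux


local notation "⟪" x ", " y "⟫" => @inner ℂ _ _ x y

set_option maxHeartbeats 2000000 in
/-- Fix an s-regular summation method. If for every datum
`(μ, U, A, φ)` of the reduced rank-two commutator setting in which `φ` moreover
coincides `μ`-a.e. with a continuous function on the circle the net `W₋(α)`
converges in the weak operator topology, then for every datum of the reduced
rank-two commutator setting (`φ` an arbitrary real-valued `L²(μ)` function) the
net `W₋(α)` converges in the weak operator topology. -/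
theorem reduction_to_continuous_symbols
    {E : Type*} [LinearOrder E] [Nonempty E] (S : SRegular E)
    (hyp : ∀ (μ : Measure Circle) [IsFiniteMeasure μ], μ ≠ 0 →
      μ ⟂ₘ Measure.haar → NoAtoms μ →
      ∀ (U : unitary (Lp ℂ 2 μ →L[ℂ] Lp ℂ 2 μ)),
        (∀ h : Lp ℂ 2 μ, ((U : Lp ℂ 2 μ →L[ℂ] Lp ℂ 2 μ) h : Circle → ℂ)
          =ᵐ[μ] fun z => (z : ℂ) * (h : Circle → ℂ) z) →
      ∀ (φ : Lp ℂ 2 μ), (∀ᵐ z ∂μ, ((φ : Circle → ℂ) z).im = 0) →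
        (∃ ψ : C(Circle, ℝ), (φ : Circle → ℂ) =ᵐ[μ] fun z => (ψ z : ℂ)) →
      ∀ (A : Lp ℂ 2 μ →L[ℂ] Lp ℂ 2 μ),
        (∀ h : Lp ℂ 2 μ,
          A ((U : Lp ℂ 2 μ →L[ℂ] Lp ℂ 2 μ) h) - (U : Lp ℂ 2 μ →L[ℂ] Lp ℂ 2 μ) (A h)
            = (inner ℂ φ h : ℂ) • oneLp μ - (inner ℂ (oneLp μ) h : ℂ) • φ) →
      ∃ W : Lp ℂ 2 μ →L[ℂ] Lp ℂ 2 μ,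
        ∀ h₁ h₂ : Lp ℂ 2 μ, Tendsto (fun α => (inner ℂ (Wminus S U A α h₁) h₂ : ℂ))
          atTop (𝓝 (inner ℂ (W h₁) h₂ : ℂ))) :
    ∀ (μ : Measure Circle) [IsFiniteMeasure μ], μ ≠ 0 →
      μ ⟂ₘ Measure.haar → NoAtoms μ →
      ∀ (U : unitary (Lp ℂ 2 μ →L[ℂ] Lp ℂ 2 μ)),
        (∀ h : Lp ℂ 2 μ, ((U : Lp ℂ 2 μ →L[ℂ] Lp ℂ 2 μ) h : Circle → ℂ)
          =ᵐ[μ] fun z => (z : ℂ) * (h : Circle → ℂ) z) →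
      ∀ (φ : Lp ℂ 2 μ), (∀ᵐ z ∂μ, ((φ : Circle → ℂ) z).im = 0) →
      ∀ (A : Lp ℂ 2 μ →L[ℂ] Lp ℂ 2 μ),
        (∀ h : Lp ℂ 2 μ,
          A ((U : Lp ℂ 2 μ →L[ℂ] Lp ℂ 2 μ) h) - (U : Lp ℂ 2 μ →L[ℂ] Lp ℂ 2 μ) (A h)
            = (inner ℂ φ h : ℂ) • oneLp μ - (inner ℂ (oneLp μ) h : ℂ) • φ) →
      ∃ W : Lp ℂ 2 μ →L[ℂ] Lp ℂ 2 μ,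
        ∀ h₁ h₂ : Lp ℂ 2 μ, Tendsto (fun α => (inner ℂ (Wminus S U A α h₁) h₂ : ℂ))
          atTop (𝓝 (inner ℂ (W h₁) h₂ : ℂ)) := by
  intro μ _i hμ0 hsing hna U hU φ hφre A hcomm
  haveI := _i
  haveI := hna
  classical
  -- ### Step 1: a Lusin-type statement for `φ`.
  have lusin : ∀ δ : ℝ≥0∞, δ ≠ 0 → ∃ K : Set Circle, IsClosed K ∧ μ Kᶜ < δ ∧
      ∃ ψ : C(Circle, ℝ), (φ : Circle → ℂ) =ᵐ[μ.restrict K] fun z => (ψ z : ℂ) := by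
    intro δ hδ
    set f₀ := (Lp.aestronglyMeasurable φ).mk _ with hf₀def
    have hf₀sm : StronglyMeasurable f₀ := (Lp.aestronglyMeasurable φ).stronglyMeasurable_mk
    have hf₀ae : (φ : Circle → ℂ) =ᵐ[μ] f₀ := (Lp.aestronglyMeasurable φ).ae_eq_mk
    have hg : ∀ j : ℕ, ∃ g : Circle →ᵇ ℂ,
        eLpNorm ((φ : Circle → ℂ) - (g : Circle → ℂ)) 2 μ ≤ (2 : ℝ≥0∞)⁻¹ ^ (2 * j) := by
      intro j
      obtain ⟨g, hg1, -⟩ := (Lp.memLp φ).exists_boundedContinuous_eLpNorm_sub_le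
        (by norm_num : (2 : ℝ≥0∞) ≠ ∞)
        (pow_ne_zero (2 * j) (ENNReal.inv_ne_zero.2 (by norm_num : (2 : ℝ≥0∞) ≠ ∞)))
      exact ⟨g, hg1⟩
    choose g hgle using hg
    set Ej : ℕ → Set Circle := fun j =>
      {z | (2 : ℝ≥0∞)⁻¹ ^ j ≤ (‖(f₀ - ((g j : Circle → ℂ))) z‖₊ : ℝ≥0∞)} with hEdef
    have hEmeas : ∀ j, MeasurableSet (Ej j) := by
      intro j
      have hm : Measurable (f₀ - ((g j : Circle → ℂ))) :=
        (hf₀sm.sub (g j).continuous.stronglyMeasurable).measurable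
      exact measurableSet_le measurable_const hm.nnnorm.coe_nnreal_ennreal
    have key2 : ∀ m n : ℕ, (2 : ℝ≥0∞) ^ m * ((2 : ℝ≥0∞) ^ (m + n))⁻¹
        = ((2 : ℝ≥0∞) ^ n)⁻¹ := by
      intro m n
      rw [pow_add, ENNReal.mul_inv (Or.inl (pow_ne_zero _ (by norm_num)))
        (Or.inl (ENNReal.pow_ne_top (by norm_num))), ← mul_assoc,
        ENNReal.mul_inv_cancel (pow_ne_zero _ (by norm_num))
          (ENNReal.pow_ne_top (by norm_num)), one_mul]
    have hEbound : ∀ j, μ (Ej j) ≤ (2 : ℝ≥0∞)⁻¹ ^ j := by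
      intro j
      have hsm : AEStronglyMeasurable (f₀ - ((g j : Circle → ℂ))) μ :=
        (hf₀sm.sub (g j).continuous.stronglyMeasurable).aestronglyMeasurable
      have hcheb := meas_ge_le_mul_pow_eLpNorm_enorm (μ := μ) (p := 2) (by norm_num) (by norm_num)
        hsm (ε := (2 : ℝ≥0∞)⁻¹ ^ j) (pow_ne_zero _ (ENNReal.inv_ne_zero.2 (by norm_num)))
        (fun h => absurd h (ENNReal.pow_ne_top (ENNReal.inv_ne_top.2 two_ne_zero)))
      have heq : eLpNorm (f₀ - ((g j : Circle → ℂ))) 2 μ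
          = eLpNorm ((φ : Circle → ℂ) - (g j : Circle → ℂ)) 2 μ := by
        refine eLpNorm_congr_ae ?_
        filter_upwards [hf₀ae] with z hz
        simp only [Pi.sub_apply]
        rw [hz]
      have hle : μ (Ej j) ≤ (((2 : ℝ≥0∞)⁻¹ ^ j)⁻¹) ^ (2 : ℝ≥0∞).toReal
          * ((2 : ℝ≥0∞)⁻¹ ^ (2 * j)) ^ (2 : ℝ≥0∞).toReal := by
        refine le_trans hcheb ?_
        refine mul_le_mul_right (ENNReal.rpow_le_rpow ?_ (by norm_num)) _
        rw [heq]; exact hgle j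
      refine le_trans hle ?_
      have h2 : ((2 : ℝ≥0∞)).toReal = ((2 : ℕ) : ℝ) := by norm_num
      rw [h2, ENNReal.rpow_natCast, ENNReal.rpow_natCast]
      have e1 : (((2 : ℝ≥0∞)⁻¹ ^ j)⁻¹) = 2 ^ j := by
        rw [← ENNReal.inv_pow, inv_inv]
      have e2 : ((2 : ℝ≥0∞)⁻¹ ^ (2 * j)) = (2 ^ (2 * j))⁻¹ := by
        rw [← ENNReal.inv_pow]
      have e3 : (((2 : ℝ≥0∞) ^ (2 * j))⁻¹) ^ 2 = ((2 : ℝ≥0∞) ^ (2 * j * 2))⁻¹ := by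
        rw [← ENNReal.inv_pow, ← pow_mul]
      rw [e1, e2, e3, ← pow_mul]
      have hexp : 2 * j * 2 = j * 2 + 2 * j := by ring
      rw [hexp, key2 (j * 2) (2 * j), ← ENNReal.inv_pow, ENNReal.inv_le_inv]
      exact pow_le_pow_right₀ one_le_two (by omega)
    have hδ4pos : (0 : ℝ≥0∞) < δ / 4 := ENNReal.div_pos hδ (by norm_num)
    obtain ⟨m, hm⟩ := ((ENNReal.tendsto_pow_atTop_nhds_zero_of_lt_one
      (by simp [ENNReal.inv_lt_one] : (2 : ℝ≥0∞)⁻¹ < 1)).eventually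
      (gt_mem_nhds hδ4pos)).exists
    set G : Set Circle := ⋃ j, Ej (j + m) with hGdef
    have hGmeas : MeasurableSet G := MeasurableSet.iUnion fun j => hEmeas (j + m)
    have hGle : μ G ≤ (2 : ℝ≥0∞)⁻¹ ^ m * 2 := by
      refine le_trans (measure_iUnion_le _) ?_
      refine le_trans (ENNReal.tsum_le_tsum fun j => hEbound (j + m)) ?_
      have h1 : ∀ j : ℕ, (2 : ℝ≥0∞)⁻¹ ^ (j + m) = (2 : ℝ≥0∞)⁻¹ ^ j * (2 : ℝ≥0∞)⁻¹ ^ m :=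
        fun j => pow_add _ j m
      rw [tsum_congr h1, ENNReal.tsum_mul_right, ENNReal.tsum_geometric,
        ENNReal.one_sub_inv_two, inv_inv, mul_comm]
    have hδ42 : δ / 4 * 2 = δ / 2 := by
      have h4 : (4 : ℝ≥0∞) = 2 * 2 := by norm_num
      rw [div_eq_mul_inv, div_eq_mul_inv, h4,
        ENNReal.mul_inv (Or.inl (by norm_num)) (Or.inl (by norm_num)),
        mul_assoc, mul_assoc, ENNReal.inv_mul_cancel (by norm_num) (by norm_num), mul_one]
    have hGlt : μ G < δ / 2 := by
      refine lt_of_le_of_lt hGle ?_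
      calc (2 : ℝ≥0∞)⁻¹ ^ m * 2 < δ / 4 * 2 :=
            ENNReal.mul_lt_mul_left (by norm_num) (by norm_num) hm
        _ = δ / 2 := hδ42
    have hunif : TendstoUniformlyOn (fun j z => (g (j + m) : Circle → ℂ) z) f₀ atTop Gᶜ := by
      rw [Metric.tendstoUniformlyOn_iff]
      intro ε hε
      obtain ⟨j₀, hj₀⟩ := exists_pow_lt_of_lt_one hε (by norm_num : (2 : ℝ)⁻¹ < 1)
      rw [eventually_atTop]
      refine ⟨j₀, fun j hj z hz => ?_⟩
      have hz' : z ∉ Ej (j + m) := fun hmem => hz (Set.mem_iUnion.2 ⟨j, hmem⟩)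
      have hlt : (‖(f₀ - ((g (j + m) : Circle → ℂ))) z‖₊ : ℝ≥0∞) < (2 : ℝ≥0∞)⁻¹ ^ (j + m) :=
        not_le.1 hz'
      have hofReal : (2 : ℝ≥0∞)⁻¹ ^ (j + m) = ENNReal.ofReal ((2 : ℝ)⁻¹ ^ (j + m)) := by
        rw [ENNReal.ofReal_pow (by norm_num)]
        congr 1
        rw [ENNReal.ofReal_inv_of_pos (by norm_num)]
        norm_num
      rw [hofReal, ← enorm_eq_nnnorm, ← ofReal_norm] at hlt
      have hlt' : ‖(f₀ - ((g (j + m) : Circle → ℂ))) z‖ < (2 : ℝ)⁻¹ ^ (j + m) :=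
        (ENNReal.ofReal_lt_ofReal_iff (by positivity)).1 hlt
      have hre : dist (f₀ z) ((g (j + m) : Circle → ℂ) z) < (2 : ℝ)⁻¹ ^ (j + m) := by
        rw [dist_eq_norm]
        simpa only [Pi.sub_apply] using hlt'
      calc dist (f₀ z) ((g (j + m) : Circle → ℂ) z) < (2 : ℝ)⁻¹ ^ (j + m) := hre
        _ ≤ (2 : ℝ)⁻¹ ^ j :=
            pow_le_pow_of_le_one (by norm_num) (by norm_num) (Nat.le_add_right j m)
        _ ≤ (2 : ℝ)⁻¹ ^ j₀ := pow_le_pow_of_le_one (by norm_num) (by norm_num) hj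
        _ < ε := hj₀
    have hcont : ContinuousOn f₀ Gᶜ :=
      hunif.continuousOn (Frequently.of_forall fun j => (g (j + m)).continuous.continuousOn)
    have hδ2ne : (δ / 2 : ℝ≥0∞) ≠ 0 := (ENNReal.div_pos hδ (by norm_num)).ne'
    obtain ⟨K, hKsub, hKclosed, hKdiff⟩ :=
      (hGmeas.compl).exists_isClosed_diff_lt (measure_ne_top μ _) hδ2ne
    refine ⟨K, hKclosed, ?_, ?_⟩
    · have hsub : Kᶜ ⊆ G ∪ (Gᶜ \ K) := by
        intro z hzK
        by_cases hzG : z ∈ G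
        · exact Or.inl hzG
        · exact Or.inr ⟨hzG, hzK⟩
      calc μ Kᶜ ≤ μ (G ∪ (Gᶜ \ K)) := measure_mono hsub
        _ ≤ μ G + μ (Gᶜ \ K) := measure_union_le _ _
        _ < δ / 2 + δ / 2 := ENNReal.add_lt_add hGlt hKdiff
        _ = δ := ENNReal.add_halves δ
    · have hcK : ContinuousOn f₀ K := hcont.mono hKsub
      have hcRe : Continuous fun z : K => (f₀ z).re :=
        Complex.continuous_re.comp hcK.restrict
      obtain ⟨ψ, hψ⟩ := ContinuousMap.exists_restrict_eq hKclosed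
        (⟨fun z : K => (f₀ z).re, hcRe⟩ : C(K, ℝ))
      refine ⟨ψ, ?_⟩
      have h1 : ∀ᵐ z ∂(μ.restrict K), z ∈ K := ae_restrict_mem hKclosed.measurableSet
      filter_upwards [h1, ae_restrict_of_ae hf₀ae, ae_restrict_of_ae hφre]
        with z hz he him
      have hψz : ψ z = (f₀ z).re := by
        have h2 := DFunLike.congr_fun hψ (⟨z, hz⟩ : K)
        simpa using h2
      rw [he, hψz]
      refine Complex.ext ?_ ?_
      · simp
      · rw [← he]
        simpa using him
  -- ### Step 2: uniform bound for matrix coefficients of `Wminus`.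
  have hWb : ∀ (α : E) (x y : Lp ℂ 2 μ),
      ‖⟪Wminus S U A α x, y⟫‖ ≤ ‖A‖ * ‖x‖ * ‖y‖ := by
    intro α x y
    refine le_trans (norm_inner_le_norm _ _) ?_
    have h1 := (Wminus S U A α).le_opNorm x
    have h2 := RedAux.wminus_norm_le S U A α
    have h3 : ‖Wminus S U A α x‖ ≤ ‖A‖ * ‖x‖ :=
      le_trans h1 (mul_le_mul_of_nonneg_right h2 (norm_nonneg _))
    exact mul_le_mul_of_nonneg_right h3 (norm_nonneg _)
  -- ### Step 3: WOT-convergence against vectors supported in a good compact set.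
  have hK_main : ∀ (K : Set Circle) (hK : MeasurableSet K), μ.restrict K ≠ 0 →
      (∃ ψ : C(Circle, ℝ), (φ : Circle → ℂ) =ᵐ[μ.restrict K] fun z => (ψ z : ℂ)) →
      ∀ f₁ f₂ : Lp ℂ 2 (μ.restrict K), ∃ c : ℂ,
        Tendsto (fun α => ⟪Wminus S U A α (RedAux.extL μ K hK f₁),
          RedAux.extL μ K hK f₂⟫) atTop (𝓝 c) := by
    intro K hK hν0 hψex
    set ν := μ.restrict K with hνdef
    set J := RedAux.extL μ K hK with hJdef
    set R := RedAux.restL μ K with hRdef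
    set V := RedAux.mulZU ν with hVdef
    set A' : Lp ℂ 2 ν →L[ℂ] Lp ℂ 2 ν := R ∘L A ∘L J with hA'def
    have hA'app : ∀ g, A' g = R (A (J g)) := fun g => rfl
    have hJV : ∀ f : Lp ℂ 2 ν,
        (U : Lp ℂ 2 μ →L[ℂ] Lp ℂ 2 μ) (J f)
          = J ((V : Lp ℂ 2 ν →L[ℂ] Lp ℂ 2 ν) f) := by
      intro f
      apply Lp.ext
      have h5 := RedAux.indicator_ae_congr μ hK (RedAux.mulZU_coe ν f)
      filter_upwards [hU (J f), RedAux.extL_coe μ K hK f,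
        RedAux.extL_coe μ K hK ((V : Lp ℂ 2 ν →L[ℂ] Lp ℂ 2 ν) f), h5] with z e1 e2 e3 e5
      simp only [hJdef, hVdef] at e1 e3 ⊢
      simp only [e1, e2, e3, e5]
      by_cases hz : z ∈ K
      · simp [Set.indicator_of_mem hz]
      · simp [Set.indicator_of_notMem hz]
    have hVR : ∀ gg : Lp ℂ 2 μ,
        (V : Lp ℂ 2 ν →L[ℂ] Lp ℂ 2 ν) (R gg)
          = R ((U : Lp ℂ 2 μ →L[ℂ] Lp ℂ 2 μ) gg) := by
      intro gg
      apply Lp.ext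
      filter_upwards [RedAux.mulZU_coe ν (R gg), RedAux.restL_coe μ K gg,
        RedAux.restL_coe μ K ((U : Lp ℂ 2 μ →L[ℂ] Lp ℂ 2 μ) gg),
        ae_restrict_of_ae (hU gg)] with z e1 e2 e3 e4
      simp only [hVdef, hRdef] at e1 ⊢
      simp only [e1, e2, e3, e4]
    have hJVnat : ∀ (n : ℕ) (f : Lp ℂ 2 ν),
        ((U ^ n : unitary _) : Lp ℂ 2 μ →L[ℂ] Lp ℂ 2 μ) (J f)
          = J (((V ^ n : unitary _) : Lp ℂ 2 ν →L[ℂ] Lp ℂ 2 ν) f) := by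
      intro n
      induction n with
      | zero => intro f; simp only [pow_zero]; rw [RedAux.u_one_apply, RedAux.u_one_apply]
      | succ n ih =>
        intro f
        rw [pow_succ, pow_succ, RedAux.u_mul_apply, RedAux.u_mul_apply, hJV f, ih]
    have hJVz : ∀ (n : ℕ) (f : Lp ℂ 2 ν),
        ((U ^ (n : ℤ) : unitary _) : Lp ℂ 2 μ →L[ℂ] Lp ℂ 2 μ) (J f)
          = J (((V ^ (n : ℤ) : unitary _) : Lp ℂ 2 ν →L[ℂ] Lp ℂ 2 ν) f) := by
      intro n f
      rw [zpow_natCast, zpow_natCast]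
      exact hJVnat n f
    have hJVzneg : ∀ (n : ℕ) (f : Lp ℂ 2 ν),
        ((U ^ (-(n : ℤ)) : unitary _) : Lp ℂ 2 μ →L[ℂ] Lp ℂ 2 μ) (J f)
          = J (((V ^ (-(n : ℤ)) : unitary _) : Lp ℂ 2 ν →L[ℂ] Lp ℂ 2 ν) f) := by
      intro n f
      have h2 : ((V ^ (n : ℤ) : unitary _) : Lp ℂ 2 ν →L[ℂ] Lp ℂ 2 ν)
          (((V ^ (-(n : ℤ)) : unitary _) : Lp ℂ 2 ν →L[ℂ] Lp ℂ 2 ν) f) = f := by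
        rw [← RedAux.u_mul_apply, ← zpow_add, add_neg_cancel, zpow_zero, RedAux.u_one_apply]
      have h1 := hJVz n (((V ^ (-(n : ℤ)) : unitary _) : Lp ℂ 2 ν →L[ℂ] Lp ℂ 2 ν) f)
      rw [h2] at h1
      have h3 := congrArg ((U ^ (-(n : ℤ)) : unitary _) : Lp ℂ 2 μ →L[ℂ] Lp ℂ 2 μ) h1
      rw [← RedAux.u_mul_apply, ← zpow_add, neg_add_cancel, zpow_zero,
        RedAux.u_one_apply] at h3
      exact h3.symm
    have hterm : ∀ (α : E) (n : ℕ) (g₁ g₂ : Lp ℂ 2 ν),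
        ⟪RedAux.wterm S V A' α n g₁, g₂⟫ = ⟪RedAux.wterm S U A α n (J g₁), J g₂⟫ := by
      intro α n g₁ g₂
      rw [RedAux.wterm_inner, RedAux.wterm_inner]
      congr 1
      rw [RedAux.inner_u_zpow V (n : ℤ), hA'app,
        RedAux.inner_restL μ K hK, ← hJVzneg n g₁, ← hJVzneg n g₂]
      conv_rhs => rw [RedAux.inner_u_zpow U (n : ℤ)]
    have htransfer : ∀ (α : E) (g₁ g₂ : Lp ℂ 2 ν),
        ⟪Wminus S V A' α g₁, g₂⟫ = ⟪Wminus S U A α (J g₁), J g₂⟫ := by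
      intro α g₁ g₂
      rw [RedAux.wminus_inner_eq, RedAux.wminus_inner_eq]
      exact tsum_congr fun n => hterm α n g₁ g₂
    have hcomm' : ∀ h : Lp ℂ 2 ν,
        A' ((V : Lp ℂ 2 ν →L[ℂ] Lp ℂ 2 ν) h) - (V : Lp ℂ 2 ν →L[ℂ] Lp ℂ 2 ν) (A' h)
          = (inner ℂ (R φ) h : ℂ) • oneLp ν - (inner ℂ (oneLp ν) h : ℂ) • (R φ) := by
      intro h
      have e1 : A' ((V : Lp ℂ 2 ν →L[ℂ] Lp ℂ 2 ν) h)
          = R (A ((U : Lp ℂ 2 μ →L[ℂ] Lp ℂ 2 μ) (J h))) := by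
        rw [hA'app, hJV h]
      have e2 : (V : Lp ℂ 2 ν →L[ℂ] Lp ℂ 2 ν) (A' h)
          = R ((U : Lp ℂ 2 μ →L[ℂ] Lp ℂ 2 μ) (A (J h))) := by
        rw [hA'app]; exact hVR (A (J h))
      rw [e1, e2, ← map_sub, hcomm (J h), map_sub, _root_.map_smul, _root_.map_smul,
        RedAux.restL_oneLp μ K, ← RedAux.inner_restL μ K hK φ h,
        ← RedAux.inner_restL μ K hK (oneLp μ) h, RedAux.restL_oneLp μ K]
    have hνsing : ν ⟂ₘ Measure.haar :=
      hsing.mono_ac (Measure.absolutelyContinuous_of_le Measure.restrict_le_self)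
        Measure.AbsolutelyContinuous.rfl
    have hVprop : ∀ h : Lp ℂ 2 ν,
        (((V : unitary (Lp ℂ 2 ν →L[ℂ] Lp ℂ 2 ν)) : Lp ℂ 2 ν →L[ℂ] Lp ℂ 2 ν) h : Circle → ℂ)
          =ᵐ[ν] fun z => (z : ℂ) * (h : Circle → ℂ) z := RedAux.mulZU_coe ν
    have hφ're : ∀ᵐ z ∂ν, ((R φ : Circle → ℂ) z).im = 0 := by
      filter_upwards [RedAux.restL_coe μ K φ, ae_restrict_of_ae hφre] with z e1 e2
      rw [e1]; exact e2
    have hψ' : ∃ ψ : C(Circle, ℝ), ((R φ : Circle → ℂ)) =ᵐ[ν] fun z => (ψ z : ℂ) := by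
      obtain ⟨ψ, hψ⟩ := hψex
      exact ⟨ψ, (RedAux.restL_coe μ K φ).trans hψ⟩
    obtain ⟨W', hW'⟩ := hyp ν hν0 hνsing (by haveI : NullSingletonClass μ := hna; exact (inferInstance : NullSingletonClass ν)) V hVprop (R φ) hφ're hψ' A' hcomm'
    intro f₁ f₂
    refine ⟨⟪W' f₁, f₂⟫, ?_⟩
    have heq : ∀ α : E, ⟪Wminus S U A α (J f₁), J f₂⟫ = ⟪Wminus S V A' α f₁, f₂⟫ :=
      fun α => (htransfer α f₁ f₂).symm
    simpa only [heq] using hW' f₁ f₂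
  -- ### Step 4: for each pair, the net of matrix coefficients converges.
  have hpair : ∀ h₁ h₂ : Lp ℂ 2 μ, ∃ c : ℂ,
      Tendsto (fun α => ⟪Wminus S U A α h₁, h₂⟫) atTop (𝓝 c) := by
    intro h₁ h₂
    have hcauchy : Cauchy (map (fun α => ⟪Wminus S U A α h₁, h₂⟫) atTop) := by
      rw [Metric.cauchy_iff]
      refine ⟨Filter.map_neBot, ?_⟩
      intro ε hε
      set Bc : ℝ := ‖A‖ + 1 with hBc
      set Cc : ℝ := ‖h₁‖ + ‖h₂‖ + 1 with hCc
      have hBpos : 0 < Bc := by positivity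
      have hCpos : 0 < Cc := by rw [hCc]; positivity
      set ε' : ℝ := ε / (8 * Bc * Cc) with hε'def
      have hε'pos : 0 < ε' := by rw [hε'def]; positivity
      obtain ⟨δ₁, hδ₁pos, hδ₁⟩ := (Lp.memLp h₁).eLpNorm_indicator_le one_le_two
        (by norm_num : (2 : ℝ≥0∞) ≠ ∞) hε'pos
      obtain ⟨δ₂, hδ₂pos, hδ₂⟩ := (Lp.memLp h₂).eLpNorm_indicator_le one_le_two
        (by norm_num : (2 : ℝ≥0∞) ≠ ∞) hε'pos
      set δ : ℝ≥0∞ := min (ENNReal.ofReal δ₁) (min (ENNReal.ofReal δ₂) (μ Set.univ))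
        with hδdef
      have hδ0 : δ ≠ 0 := by
        have h1 : (0 : ℝ≥0∞) < ENNReal.ofReal δ₁ := ENNReal.ofReal_pos.2 hδ₁pos
        have h2 : (0 : ℝ≥0∞) < ENNReal.ofReal δ₂ := ENNReal.ofReal_pos.2 hδ₂pos
        have h3 : (0 : ℝ≥0∞) < μ Set.univ :=
          pos_iff_ne_zero.2 (Measure.measure_univ_ne_zero.2 hμ0)
        exact (lt_min h1 (lt_min h2 h3)).ne'
      obtain ⟨K, hKclosed, hKlt, ψ, hψ⟩ := lusin δ hδ0
      have hK : MeasurableSet K := hKclosed.measurableSet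
      have hμK : μ.restrict K ≠ 0 := by
        rw [Ne, Measure.restrict_eq_zero]
        intro h0
        have h1 : μ Set.univ = μ Kᶜ := by
          rw [← measure_add_measure_compl hK, h0, zero_add]
        have h2 : μ Kᶜ < μ Set.univ :=
          lt_of_lt_of_le hKlt (le_trans (min_le_right _ _) (min_le_right _ _))
        rw [← h1] at h2
        exact lt_irrefl _ h2
      obtain ⟨c, hc⟩ := hK_main K hK hμK ⟨ψ, hψ⟩ (RedAux.restL μ K h₁) (RedAux.restL μ K h₂)
      set P₁ := RedAux.extL μ K hK (RedAux.restL μ K h₁) with hP₁def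
      set P₂ := RedAux.extL μ K hK (RedAux.restL μ K h₂) with hP₂def
      have hdiff : ∀ h : Lp ℂ 2 μ,
          (↑(h - RedAux.extL μ K hK (RedAux.restL μ K h)) : Circle → ℂ)
            =ᵐ[μ] Kᶜ.indicator (h : Circle → ℂ) := by
        intro h
        have e3 := RedAux.indicator_ae_congr μ hK (RedAux.restL_coe μ K h)
        filter_upwards [Lp.coeFn_sub h (RedAux.extL μ K hK (RedAux.restL μ K h)),
          RedAux.extL_coe μ K hK (RedAux.restL μ K h), e3] with z f1 f2 f3
        rw [f1]
        simp only [Pi.sub_apply]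
        rw [f2, f3]
        by_cases hz : z ∈ K
        · rw [Set.indicator_of_mem hz, Set.indicator_of_notMem (by simpa using hz)]
          simp
        · rw [Set.indicator_of_notMem hz, Set.indicator_of_mem (by simpa using hz)]
          simp
      have hsmall₁ : ‖h₁ - P₁‖ ≤ ε' := by
        rw [hP₁def, Lp.norm_def, eLpNorm_congr_ae (hdiff h₁)]
        refine ENNReal.toReal_le_of_le_ofReal hε'pos.le (hδ₁ Kᶜ hK.compl ?_)
        exact le_trans hKlt.le (min_le_left _ _)
      have hsmall₂ : ‖h₂ - P₂‖ ≤ ε' := by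
        rw [hP₂def, Lp.norm_def, eLpNorm_congr_ae (hdiff h₂)]
        refine ENNReal.toReal_le_of_le_ofReal hε'pos.le (hδ₂ Kᶜ hK.compl ?_)
        exact le_trans hKlt.le (le_trans (min_le_right _ _) (min_le_left _ _))
      have hPn₁ : ‖P₁‖ ≤ ‖h₁‖ := by
        rw [hP₁def, RedAux.norm_extL_apply]
        exact RedAux.norm_restL_apply_le μ K h₁
      have hA_B : ‖A‖ ≤ Bc := by rw [hBc]; linarith [norm_nonneg A]
      have h1C : ‖h₁‖ ≤ Cc := by rw [hCc]; linarith [norm_nonneg h₂]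
      have h2C : ‖h₂‖ ≤ Cc := by rw [hCc]; linarith [norm_nonneg h₁]
      have hclose : ∀ α : E,
          dist ⟪Wminus S U A α h₁, h₂⟫ ⟪Wminus S U A α P₁, P₂⟫ ≤ ε / 4 := by
        intro α
        rw [dist_eq_norm]
        have e : ⟪Wminus S U A α h₁, h₂⟫ - ⟪Wminus S U A α P₁, P₂⟫
            = ⟪Wminus S U A α (h₁ - P₁), h₂⟫ + ⟪Wminus S U A α P₁, h₂ - P₂⟫ := by
          rw [map_sub, inner_sub_left, inner_sub_right]
          ring
        rw [e]
        refine le_trans (norm_add_le _ _) ?_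
        have b1 := hWb α (h₁ - P₁) h₂
        have b2 := hWb α P₁ (h₂ - P₂)
        have c1 : ‖A‖ * ‖h₁ - P₁‖ * ‖h₂‖ ≤ Bc * ε' * Cc :=
          mul_le_mul (mul_le_mul hA_B hsmall₁ (norm_nonneg _) hBpos.le) h2C
            (norm_nonneg _) (by positivity)
        have c2 : ‖A‖ * ‖P₁‖ * ‖h₂ - P₂‖ ≤ Bc * Cc * ε' :=
          mul_le_mul (mul_le_mul hA_B (hPn₁.trans h1C) (norm_nonneg _) hBpos.le)
            hsmall₂ (norm_nonneg _) (by positivity)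
        have hkey : Bc * ε' * Cc + Bc * Cc * ε' = ε / 4 := by
          rw [hε'def]
          field_simp
          ring
        calc ‖⟪Wminus S U A α (h₁ - P₁), h₂⟫‖ + ‖⟪Wminus S U A α P₁, h₂ - P₂⟫‖
            ≤ ‖A‖ * ‖h₁ - P₁‖ * ‖h₂‖ + ‖A‖ * ‖P₁‖ * ‖h₂ - P₂‖ := add_le_add b1 b2
          _ ≤ Bc * ε' * Cc + Bc * Cc * ε' := add_le_add c1 c2
          _ = ε / 4 := hkey
      have hball := (Metric.tendsto_nhds.mp hc) (ε / 8) (by positivity)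
      refine ⟨Metric.ball c (ε / 4 + ε / 8), ?_, ?_⟩
      · rw [mem_map]
        filter_upwards [hball] with α hα
        simp only [Set.mem_preimage, Metric.mem_ball]
        calc dist ⟪Wminus S U A α h₁, h₂⟫ c
            ≤ dist ⟪Wminus S U A α h₁, h₂⟫ ⟪Wminus S U A α P₁, P₂⟫
              + dist ⟪Wminus S U A α P₁, P₂⟫ c := dist_triangle _ _ _
          _ < ε / 4 + ε / 8 := add_lt_add_of_le_of_lt (hclose α) hα
      · intro x hx y hy
        calc dist x y ≤ dist x c + dist c y := dist_triangle _ _ _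
          _ < (ε / 4 + ε / 8) + (ε / 4 + ε / 8) := by
              refine add_lt_add (Metric.mem_ball.1 hx) ?_
              rw [dist_comm]
              exact Metric.mem_ball.1 hy
          _ ≤ ε := by linarith
    obtain ⟨c, hc⟩ := CompleteSpace.complete hcauchy
    exact ⟨c, hc⟩
  -- ### Step 5: assemble the limiting operator via the Riesz representation.
  let B : Lp ℂ 2 μ → Lp ℂ 2 μ → ℂ := fun h₁ h₂ => Classical.choose (hpair h₁ h₂)
  have hB : ∀ h₁ h₂ : Lp ℂ 2 μ,
      Tendsto (fun α => ⟪Wminus S U A α h₁, h₂⟫) atTop (𝓝 (B h₁ h₂)) :=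
    fun h₁ h₂ => Classical.choose_spec (hpair h₁ h₂)
  have hBbound : ∀ h₁ h₂, ‖B h₁ h₂‖ ≤ ‖A‖ * ‖h₁‖ * ‖h₂‖ := by
    intro h₁ h₂
    exact le_of_tendsto (hB h₁ h₂).norm (Eventually.of_forall fun α => hWb α h₁ h₂)
  have hBadd₂ : ∀ h₁ a b, B h₁ (a + b) = B h₁ a + B h₁ b := by
    intro h₁ a b
    refine tendsto_nhds_unique (hB h₁ (a + b)) ?_
    have := (hB h₁ a).add (hB h₁ b)
    simpa only [← inner_add_right] using this
  have hBsmul₂ : ∀ h₁ (cc : ℂ) a, B h₁ (cc • a) = cc * B h₁ a := by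
    intro h₁ cc a
    refine tendsto_nhds_unique (hB h₁ (cc • a)) ?_
    have := (hB h₁ a).const_mul cc
    simpa only [← inner_smul_right] using this
  have hBadd₁ : ∀ a b h₂, B (a + b) h₂ = B a h₂ + B b h₂ := by
    intro a b h₂
    refine tendsto_nhds_unique (hB (a + b) h₂) ?_
    have := (hB a h₂).add (hB b h₂)
    simpa only [map_add, inner_add_left] using this
  have hBsmul₁ : ∀ (cc : ℂ) a h₂, B (cc • a) h₂ = conj cc * B a h₂ := by
    intro cc a h₂
    refine tendsto_nhds_unique (hB (cc • a) h₂) ?_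
    have := (hB a h₂).const_mul (conj cc)
    simpa only [_root_.map_smul, inner_smul_left] using this
  let F : Lp ℂ 2 μ → (Lp ℂ 2 μ →L[ℂ] ℂ) := fun h₁ =>
    LinearMap.mkContinuous
      { toFun := fun h₂ => B h₁ h₂
        map_add' := hBadd₂ h₁
        map_smul' := fun cc a => by simpa using hBsmul₂ h₁ cc a }
      (‖A‖ * ‖h₁‖) (fun h₂ => by
        exact hBbound h₁ h₂)
  let W0 : Lp ℂ 2 μ → Lp ℂ 2 μ :=
    fun h₁ => (InnerProductSpace.toDual ℂ (Lp ℂ 2 μ)).symm (F h₁)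
  have hW0 : ∀ h₁ h₂, ⟪W0 h₁, h₂⟫ = B h₁ h₂ :=
    fun h₁ h₂ => InnerProductSpace.toDual_symm_apply
  let Wlin : Lp ℂ 2 μ →ₗ[ℂ] Lp ℂ 2 μ :=
    { toFun := W0
      map_add' := fun a b => ext_inner_right ℂ fun v => by
        rw [hW0, inner_add_left, hW0, hW0, hBadd₁]
      map_smul' := fun cc a => ext_inner_right ℂ fun v => by
        simp only [RingHom.id_apply]
        rw [hW0, inner_smul_left, hW0, hBsmul₁] }
  have hWlinnorm : ∀ h₁, ‖Wlin h₁‖ ≤ ‖A‖ * ‖h₁‖ := by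
    intro h₁
    have h1 : ‖(InnerProductSpace.toDual ℂ (Lp ℂ 2 μ)).symm (F h₁)‖ = ‖F h₁‖ :=
      LinearIsometryEquiv.norm_map _ _
    have h2 : ‖F h₁‖ ≤ ‖A‖ * ‖h₁‖ := LinearMap.mkContinuous_norm_le _ (by positivity) _
    calc ‖Wlin h₁‖ = ‖F h₁‖ := h1
      _ ≤ ‖A‖ * ‖h₁‖ := h2
  refine ⟨Wlin.mkContinuous ‖A‖ hWlinnorm, fun h₁ h₂ => ?_⟩
  have hWh : ⟪(Wlin.mkContinuous ‖A‖ hWlinnorm) h₁, h₂⟫ = B h₁ h₂ := hW0 h₁ h₂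
  rw [hWh]
  exact hB h₁ h₂

end
end

section
/- Let H be a complex Hilbert space, U a unitary operator on H, A a bounded operator on H, and K = AU − UA. Fix an s-regular summation method. Then for every α ∈ E, W₊(α)U − U W₋(α) = Σ_{n=0}^∞ p_{α,n} Σ_{l=−n}^{n} U^{l} K U^{−l}, where the series on the right converges absolutely in operator norm (each inner sum Σ_{l=−n}^{n} U^{l} K U^{−l} equals U^{−n}AU^{n+1} − U^{n+1}AU^{−n} and so has norm at most 2‖A‖). -/
open MeasureTheory Filter Topology ComplexConjugate

noncomputable section

/-- The symmetrized conjugate sum `Σ_{l=-n}^{n} Uˡ K U⁻ˡ` of an operator `K`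
by a unitary `U`. -/
def conjSum {H : Type*} [NormedAddCommGroup H] [InnerProductSpace ℂ H] [CompleteSpace H]
    (U : unitary (H →L[ℂ] H)) (K : H →L[ℂ] H) (n : ℕ) : H →L[ℂ] H :=
  ∑ l ∈ Finset.Icc (-(n : ℤ)) (n : ℤ),
    ((U ^ l : unitary (H →L[ℂ] H)) : H →L[ℂ] H) ∘L K ∘L
      ((U ^ (-l) : unitary (H →L[ℂ] H)) : H →L[ℂ] H)

set_option maxHeartbeats 1000000 in
set_option synthInstance.maxHeartbeats 400000 in
/-- For a unitary `U` and a bounded operator `A` on a complex Hilbert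
space, with `K = AU - UA`, and for any s-regular summation method, one has for every
`α`: each inner sum `Σ_{l=-n}^{n} Uˡ K U⁻ˡ` equals `U⁻ⁿAU^{n+1} - U^{n+1}AU⁻ⁿ` and has
norm at most `2‖A‖`, the series `Σₙ p_{α,n} Σ_{l=-n}^{n} Uˡ K U⁻ˡ` converges absolutely
in operator norm, and `W₊(α)U - UW₋(α)` equals its sum. -/
theorem wave_operator_commutator_identity
    {E : Type*} [LinearOrder E] [Nonempty E] (S : SRegular E)
    {H : Type*} [NormedAddCommGroup H] [InnerProductSpace ℂ H] [CompleteSpace H]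
    (U : unitary (H →L[ℂ] H)) (A : H →L[ℂ] H)
    (K : H →L[ℂ] H) (hK : K = A ∘L (U : H →L[ℂ] H) - (U : H →L[ℂ] H) ∘L A)
    (α : E) :
    (∀ n : ℕ, conjSum U K n
        = ((U ^ (-(n : ℤ)) : unitary (H →L[ℂ] H)) : H →L[ℂ] H) ∘L A ∘L
            ((U ^ ((n : ℤ) + 1) : unitary (H →L[ℂ] H)) : H →L[ℂ] H)
          - ((U ^ ((n : ℤ) + 1) : unitary (H →L[ℂ] H)) : H →L[ℂ] H) ∘L A ∘L
            ((U ^ (-(n : ℤ)) : unitary (H →L[ℂ] H)) : H →L[ℂ] H)) ∧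
    (∀ n : ℕ, ‖conjSum U K n‖ ≤ 2 * ‖A‖) ∧
    Summable (fun n : ℕ => ‖S.p α n • conjSum U K n‖) ∧
    Wplus S U A α ∘L (U : H →L[ℂ] H) - (U : H →L[ℂ] H) ∘L Wminus S U A α
      = ∑' n : ℕ, S.p α n • conjSum U K n := by
  classical
  -- Notation: `V l = Uˡ` as a continuous linear map.
  set V : ℤ → (H →L[ℂ] H) := fun l => ((U ^ l : unitary (H →L[ℂ] H)) : H →L[ℂ] H) with hVdef
  have hVmul : ∀ a b : ℤ, V (a + b) = V a * V b := by
    intro a b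
    simp only [hVdef, zpow_add, MulMemClass.coe_mul]
  have hV1 : V 1 = (U : H →L[ℂ] H) := by simp [hVdef]
  -- `g m = Uᵐ (A U^{1-m})`
  set g : ℤ → (H →L[ℂ] H) := fun m => V m * (A * V (1 - m)) with hgdef
  have hgnorm : ∀ m : ℤ, ‖g m‖ = ‖A‖ := by
    intro m
    show ‖((U ^ m : unitary (H →L[ℂ] H)) : H →L[ℂ] H) *
      (A * ((U ^ (1 - m) : unitary (H →L[ℂ] H)) : H →L[ℂ] H))‖ = ‖A‖
    rw [CStarRing.norm_coe_unitary_mul, CStarRing.norm_mul_coe_unitary]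
  -- each summand of `conjSum` telescopes
  have hterm : ∀ l : ℤ, V l * (K * V (-l)) = g l - g (l + 1) := by
    intro l
    have hKm : K = A * V 1 - V 1 * A := by rw [hK, hV1]; rfl
    have e1 : g l = V l * (A * (V 1 * V (-l))) := by
      have h : (1 : ℤ) - l = 1 + -l := by ring
      simp only [hgdef, h, hVmul]
    have e2 : g (l + 1) = (V l * V 1) * (A * V (-l)) := by
      have h : (1 : ℤ) - (l + 1) = -l := by ring
      simp only [hgdef, h, hVmul]
    rw [hKm, e1, e2, sub_mul, mul_sub]
    simp only [mul_assoc]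
  -- telescoping
  have htel : ∀ (a : ℤ) (m : ℕ),
      (∑ l ∈ Finset.Icc a (a + (m : ℤ)), (g l - g (l + 1))) = g a - g (a + (m : ℤ) + 1) := by
    intro a m
    induction m with
    | zero => simp
    | succ m ih =>
      have hset : Finset.Icc a (a + ((m + 1 : ℕ) : ℤ))
          = insert (a + (m : ℤ) + 1) (Finset.Icc a (a + (m : ℤ))) := by
        ext x
        simp only [Finset.mem_Icc, Finset.mem_insert]
        push_cast
        omega
      have hnotmem : a + (m : ℤ) + 1 ∉ Finset.Icc a (a + (m : ℤ)) := by
        simp only [Finset.mem_Icc]; omega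
      rw [hset, Finset.sum_insert hnotmem, ih]
      have e : a + ((m + 1 : ℕ) : ℤ) + 1 = a + (m : ℤ) + 1 + 1 := by push_cast; ring
      rw [e]
      abel
  have hconj : ∀ n : ℕ, conjSum U K n = g (-(n : ℤ)) - g ((n : ℤ) + 1) := by
    intro n
    have h1 : conjSum U K n
        = ∑ l ∈ Finset.Icc (-(n : ℤ)) ((n : ℤ)), (g l - g (l + 1)) := by
      refine Finset.sum_congr rfl fun l _ => ?_
      exact hterm l
    have e : (n : ℤ) = -(n : ℤ) + ((2 * n : ℕ) : ℤ) := by push_cast; ring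
    have h2 := htel (-(n : ℤ)) (2 * n)
    rw [← e] at h2
    exact h1.trans h2
  -- part 1
  have part1 : ∀ n : ℕ, conjSum U K n
      = ((U ^ (-(n : ℤ)) : unitary (H →L[ℂ] H)) : H →L[ℂ] H) ∘L A ∘L
          ((U ^ ((n : ℤ) + 1) : unitary (H →L[ℂ] H)) : H →L[ℂ] H)
        - ((U ^ ((n : ℤ) + 1) : unitary (H →L[ℂ] H)) : H →L[ℂ] H) ∘L A ∘L
          ((U ^ (-(n : ℤ)) : unitary (H →L[ℂ] H)) : H →L[ℂ] H) := by
    intro n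
    rw [hconj n]
    have e1 : (1 : ℤ) - (-(n : ℤ)) = (n : ℤ) + 1 := by ring
    have e2 : (1 : ℤ) - ((n : ℤ) + 1) = -(n : ℤ) := by ring
    simp only [hgdef, e1, e2]
    rfl
  -- part 2
  have part2 : ∀ n : ℕ, ‖conjSum U K n‖ ≤ 2 * ‖A‖ := by
    intro n
    rw [hconj n]
    calc ‖g (-(n : ℤ)) - g ((n : ℤ) + 1)‖
        ≤ ‖g (-(n : ℤ))‖ + ‖g ((n : ℤ) + 1)‖ := norm_sub_le _ _
      _ = 2 * ‖A‖ := by rw [hgnorm, hgnorm]; ring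
  -- part 3 : summability
  have hpsummable : Summable (S.p α) := (S.hasSum_one α).summable
  have part3 : Summable (fun n : ℕ => ‖S.p α n • conjSum U K n‖) := by
    refine Summable.of_nonneg_of_le (fun n => norm_nonneg _) (fun n => ?_)
      (hpsummable.mul_right (2 * ‖A‖))
    rw [norm_smul, Real.norm_of_nonneg (S.nonneg α n)]
    exact mul_le_mul_of_nonneg_left (part2 n) (S.nonneg α n)
  refine ⟨part1, part2, part3, ?_⟩
  -- part 4 : the identity
  have hnormterm : ∀ (a b : ℤ), ‖V a * (A * V b)‖ = ‖A‖ := by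
    intro a b
    show ‖((U ^ a : unitary (H →L[ℂ] H)) : H →L[ℂ] H) *
      (A * ((U ^ b : unitary (H →L[ℂ] H)) : H →L[ℂ] H))‖ = ‖A‖
    rw [CStarRing.norm_coe_unitary_mul, CStarRing.norm_mul_coe_unitary]
  have hsummand : ∀ (f : ℕ → ℤ) (h : ℕ → ℤ),
      Summable (fun n : ℕ => S.p α n • (V (f n) * (A * V (h n)))) := by
    intro f h
    apply Summable.of_norm
    refine Summable.of_nonneg_of_le (fun n => norm_nonneg _) (fun n => ?_)
      (hpsummable.mul_right ‖A‖)
    rw [norm_smul, Real.norm_of_nonneg (S.nonneg α n), hnormterm]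
  have hWp : HasSum (fun n : ℕ => S.p α n • (V (-(n : ℤ)) * (A * V (n : ℤ))))
      (Wplus S U A α) :=
    (hsummand (fun n => -(n : ℤ)) (fun n => (n : ℤ))).hasSum
  have hWm : HasSum (fun n : ℕ => S.p α n • (V (n : ℤ) * (A * V (-(n : ℤ)))))
      (Wminus S U A α) :=
    (hsummand (fun n => (n : ℤ)) (fun n => -(n : ℤ))).hasSum
  have hWpU : HasSum (fun n : ℕ => S.p α n • (V (-(n : ℤ)) * (A * V ((n : ℤ) + 1))))
      (Wplus S U A α * (U : H →L[ℂ] H)) := by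
    have h := hWp.mul_right (U : H →L[ℂ] H)
    have e : (fun n : ℕ => S.p α n • (V (-(n : ℤ)) * (A * V (n : ℤ))) * (U : H →L[ℂ] H))
        = fun n : ℕ => S.p α n • (V (-(n : ℤ)) * (A * V ((n : ℤ) + 1))) := by
      funext n
      rw [smul_mul_assoc, hVmul (n : ℤ) 1, hV1]
      simp only [mul_assoc]
    rwa [e] at h
  have hUWm : HasSum (fun n : ℕ => S.p α n • (V ((n : ℤ) + 1) * (A * V (-(n : ℤ)))))
      ((U : H →L[ℂ] H) * Wminus S U A α) := by
    have h := hWm.mul_left (U : H →L[ℂ] H)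
    have e : (fun n : ℕ => (U : H →L[ℂ] H) * (S.p α n • (V (n : ℤ) * (A * V (-(n : ℤ))))))
        = fun n : ℕ => S.p α n • (V ((n : ℤ) + 1) * (A * V (-(n : ℤ)))) := by
      funext n
      rw [mul_smul_comm]
      congr 1
      have e1 : ((n : ℤ) + 1) = 1 + (n : ℤ) := by ring
      rw [e1, hVmul 1 (n : ℤ), hV1]
      simp only [mul_assoc]
    rwa [e] at h
  have hdiff := hWpU.sub hUWm
  have hfinal : HasSum (fun n : ℕ => S.p α n • conjSum U K n)
      (Wplus S U A α * (U : H →L[ℂ] H) - (U : H →L[ℂ] H) * Wminus S U A α) := by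
    have e : (fun n : ℕ => S.p α n • (V (-(n : ℤ)) * (A * V ((n : ℤ) + 1)))
          - S.p α n • (V ((n : ℤ) + 1) * (A * V (-(n : ℤ)))))
        = fun n : ℕ => S.p α n • conjSum U K n := by
      funext n
      rw [← smul_sub]
      congr 1
      exact (part1 n).symm
    rwa [e] at hdiff
  exact hfinal.tsum_eq.symm
end
end

section
/- Let μ be a Borel probability measure on the unit circle 𝕋 and let φ ∈ L²(μ) be real-valued. Then for every r ∈ (0,1), ‖P_r φ‖_{L²(μ)} ≤ 2‖C_r φ‖_{L²(μ)} + ‖φ‖_{L²(μ)}, where (P_r φ)(z) = ∫_𝕋 (φ(ξ) − φ(z)) · (1 − r²)/|1 − r·conj(ξ)·z|² dμ(ξ) and (C_r φ)(z) = ∫_𝕋 (φ(ξ) − φ(z)) / (1 − r·conj(ξ)·z) dμ(ξ). -/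
open MeasureTheory Filter Topology ComplexConjugate

noncomputable section

/-- The Poisson average
`(P_r φ)(z) = ∫ (φ(ξ) - φ(z)) (1 - r²)/|1 - r conj(ξ) z|² dμ(ξ)`. -/
def poissonAvg (μ : Measure Circle) (φ : Circle → ℝ) (r : ℝ) (z : Circle) : ℝ :=
  ∫ ξ, (φ ξ - φ z) *
    ((1 - r ^ 2) / ‖(1 : ℂ) - (r : ℂ) * conj ((ξ : Circle) : ℂ) * ((z : Circle) : ℂ)‖ ^ 2) ∂μ

/-- The Cauchy average `(C_r f)(z) = ∫ (f(ξ) - f(z)) / (1 - r conj(ξ) z) dμ(ξ)`. -/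
def cauchyAvg (μ : Measure Circle) (f : Circle → ℂ) (r : ℝ) (z : Circle) : ℂ :=
  ∫ ξ, (f ξ - f z) / ((1 : ℂ) - (r : ℂ) * conj ((ξ : Circle) : ℂ) * ((z : Circle) : ℂ)) ∂μ

namespace PoissonCauchyAux

open scoped ENNReal NNReal

/-- Continuity of the coercion `Circle → ℂ`. -/
lemma continuous_coe : Continuous (fun ξ : Circle => (ξ : ℂ)) :=
  continuous_induced_dom

lemma norm_w {r : ℝ} (hr0 : 0 ≤ r) (ξ z : Circle) :
    ‖(r : ℂ) * conj (ξ : ℂ) * (z : ℂ)‖ = r := by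
  simp [norm_mul, Complex.norm_conj, Circle.norm_coe,
    Complex.norm_real, abs_of_nonneg hr0]

lemma norm_d_ge {r : ℝ} (hr : r ∈ Set.Ioo (0 : ℝ) 1) (ξ z : Circle) :
    1 - r ≤ ‖(1 : ℂ) - (r : ℂ) * conj (ξ : ℂ) * (z : ℂ)‖ := by
  have h := norm_sub_norm_le (1 : ℂ) ((r : ℂ) * conj (ξ : ℂ) * (z : ℂ))
  rw [norm_one, norm_w hr.1.le] at h
  exact h

lemma d_ne_zero {r : ℝ} (hr : r ∈ Set.Ioo (0 : ℝ) 1) (ξ z : Circle) :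
    (1 : ℂ) - (r : ℂ) * conj (ξ : ℂ) * (z : ℂ) ≠ 0 := by
  intro h
  have := norm_d_ge hr ξ z
  rw [h, norm_zero] at this
  linarith [hr.2]

lemma norm_d_inv_le {r : ℝ} (hr : r ∈ Set.Ioo (0 : ℝ) 1) (ξ z : Circle) :
    ‖((1 : ℂ) - (r : ℂ) * conj (ξ : ℂ) * (z : ℂ))⁻¹‖ ≤ (1 - r)⁻¹ := by
  rw [norm_inv]
  have h1 : (0 : ℝ) < 1 - r := by linarith [hr.2]
  exact inv_anti₀ h1 (norm_d_ge hr ξ z)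

/-- The Poisson kernel equals `2 Re(1/(1-w)) - 1`. -/
lemma kernel_eq {r : ℝ} (hr : r ∈ Set.Ioo (0 : ℝ) 1) (ξ z : Circle) :
    (1 - r ^ 2) / ‖(1 : ℂ) - (r : ℂ) * conj (ξ : ℂ) * (z : ℂ)‖ ^ 2
      = 2 * (((1 : ℂ) - (r : ℂ) * conj (ξ : ℂ) * (z : ℂ))⁻¹).re - 1 := by
  set w : ℂ := (r : ℂ) * conj (ξ : ℂ) * (z : ℂ) with hw
  have hnw : ‖w‖ = r := norm_w hr.1.le ξ z
  have hd : (1 : ℂ) - w ≠ 0 := d_ne_zero hr ξ z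
  have hns : Complex.normSq (1 - w) = ‖(1 : ℂ) - w‖ ^ 2 := by
    rw [Complex.normSq_eq_norm_sq]
  have hnspos : (0 : ℝ) < Complex.normSq (1 - w) := by
    rwa [Complex.normSq_pos]
  have hre : ((1 - w)⁻¹).re = (1 - w).re / Complex.normSq (1 - w) := Complex.inv_re _
  have hwsq : w.re ^ 2 + w.im ^ 2 = r ^ 2 := by
    have : Complex.normSq w = r ^ 2 := by
      rw [Complex.normSq_eq_norm_sq, hnw]
    simpa [Complex.normSq_apply, sq] using this
  have hexp : Complex.normSq (1 - w) = 1 - 2 * w.re + r ^ 2 := by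
    simp only [Complex.normSq_apply, Complex.sub_re, Complex.sub_im, Complex.one_re,
      Complex.one_im]
    nlinarith [hwsq]
  rw [← hns, hre]
  have hre1 : (1 - w).re = 1 - w.re := by simp
  rw [hre1, hexp]
  have hD : (1 - 2 * w.re + r ^ 2) ≠ 0 := by rw [← hexp]; exact hnspos.ne'
  field_simp
  ring

variable {μ : Measure Circle} [IsProbabilityMeasure μ] {φ : Circle → ℝ} {r : ℝ}

lemma continuous_d_inv {r : ℝ} (hr : r ∈ Set.Ioo (0 : ℝ) 1) (z : Circle) :
    Continuous (fun ξ : Circle => ((1 : ℂ) - (r : ℂ) * conj (ξ : ℂ) * (z : ℂ))⁻¹) := by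
  apply Continuous.inv₀
  · exact continuous_const.sub
      ((continuous_const.mul (Complex.continuous_conj.comp continuous_coe)).mul continuous_const)
  · exact fun ξ => d_ne_zero hr ξ z

lemma continuous_d_inv' {r : ℝ} (hr : r ∈ Set.Ioo (0 : ℝ) 1) (ξ : Circle) :
    Continuous (fun z : Circle => ((1 : ℂ) - (r : ℂ) * conj (ξ : ℂ) * (z : ℂ))⁻¹) := by
  apply Continuous.inv₀
  · exact continuous_const.sub (continuous_const.mul continuous_coe)
  · exact fun z => d_ne_zero hr ξ z

lemma cauchy_integrand_integrable (hφ : Integrable φ μ) (hr : r ∈ Set.Ioo (0 : ℝ) 1)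
    (z : Circle) :
    Integrable (fun ξ => ((φ ξ : ℂ) - (φ z : ℂ)) /
      ((1 : ℂ) - (r : ℂ) * conj (ξ : ℂ) * (z : ℂ))) μ := by
  have h1 : Integrable (fun ξ => ((φ ξ : ℂ) - (φ z : ℂ))) μ :=
    hφ.ofReal.sub (integrable_const _)
  have h2 := h1.bdd_mul ((continuous_d_inv hr z).aestronglyMeasurable)
    (Filter.Eventually.of_forall fun ξ => norm_d_inv_le hr ξ z)
  simp only [div_eq_mul_inv]
  simpa [mul_comm] using h2

lemma poisson_eq (hφ : MemLp φ 2 μ) (hr : r ∈ Set.Ioo (0 : ℝ) 1) (z : Circle) :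
    poissonAvg μ φ r z
      = 2 * (cauchyAvg μ (fun z => ((φ z : ℝ) : ℂ)) r z).re + (φ z - ∫ ξ, φ ξ ∂μ) := by
  have hint : Integrable φ μ := hφ.integrable one_le_two
  have hC : Integrable (fun ξ => ((φ ξ : ℂ) - (φ z : ℂ)) /
      ((1 : ℂ) - (r : ℂ) * conj (ξ : ℂ) * (z : ℂ))) μ :=
    cauchy_integrand_integrable hint hr z
  have key : ∀ ξ : Circle,
      (φ ξ - φ z) * ((1 - r ^ 2) / ‖(1 : ℂ) - (r : ℂ) * conj (ξ : ℂ) * (z : ℂ)‖ ^ 2)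
        = 2 * (((φ ξ : ℂ) - (φ z : ℂ)) /
            ((1 : ℂ) - (r : ℂ) * conj (ξ : ℂ) * (z : ℂ))).re - (φ ξ - φ z) := by
    intro ξ
    rw [kernel_eq hr]
    have h1 : (((φ ξ : ℂ) - (φ z : ℂ)) /
        ((1 : ℂ) - (r : ℂ) * conj (ξ : ℂ) * (z : ℂ))).re
        = (φ ξ - φ z) * (((1 : ℂ) - (r : ℂ) * conj (ξ : ℂ) * (z : ℂ))⁻¹).re := by
      rw [div_eq_mul_inv, ← Complex.ofReal_sub, Complex.re_ofReal_mul]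
    rw [h1]; ring
  have hsub : Integrable (fun ξ => φ ξ - φ z) μ := by
    exact hint.sub (integrable_const _)
  have hgre : Integrable (fun ξ => (((φ ξ : ℂ) - (φ z : ℂ)) /
      ((1 : ℂ) - (r : ℂ) * conj (ξ : ℂ) * (z : ℂ))).re) μ := by
    exact Complex.reCLM.integrable_comp hC
  have hre : ∫ ξ, (((φ ξ : ℂ) - (φ z : ℂ)) /
        ((1 : ℂ) - (r : ℂ) * conj (ξ : ℂ) * (z : ℂ))).re ∂μ
      = (∫ ξ, ((φ ξ : ℂ) - (φ z : ℂ)) /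
          ((1 : ℂ) - (r : ℂ) * conj (ξ : ℂ) * (z : ℂ)) ∂μ).re := by
    simpa using Complex.reCLM.integral_comp_comm hC
  unfold poissonAvg cauchyAvg
  simp_rw [key]
  rw [integral_sub (hgre.const_mul 2) hsub, integral_const_mul, hre,
    integral_sub hint (integrable_const _), integral_const]
  simp only [measure_univ, probReal_univ, ENNReal.toReal_one, smul_eq_mul, one_mul]
  ring

lemma cauchy_aesm (hφ : MemLp φ 2 μ) (hr : r ∈ Set.Ioo (0 : ℝ) 1) :
    AEStronglyMeasurable (cauchyAvg μ (fun z => ((φ z : ℝ) : ℂ)) r) μ := by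
  have hint : Integrable φ μ := hφ.integrable one_le_two
  set A : Circle → ℂ := fun z => ∫ ξ, (φ ξ : ℂ) *
    ((1 : ℂ) - (r : ℂ) * conj (ξ : ℂ) * (z : ℂ))⁻¹ ∂μ with hA
  set B : Circle → ℂ := fun z => ∫ ξ,
    ((1 : ℂ) - (r : ℂ) * conj (ξ : ℂ) * (z : ℂ))⁻¹ ∂μ with hB
  have hAcont : Continuous A := by
    apply continuous_of_dominated (bound := fun ξ => |φ ξ| * (1 - r)⁻¹)
    · intro z
      exact (Complex.continuous_ofReal.comp_aestronglyMeasurable hint.1).mul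
        ((continuous_d_inv hr z).aestronglyMeasurable)
    · intro z
      filter_upwards with ξ
      rw [norm_mul, Complex.norm_real]
      exact mul_le_mul_of_nonneg_left (norm_d_inv_le hr ξ z) (abs_nonneg _)
    · exact hint.abs.mul_const _
    · filter_upwards with ξ
      exact continuous_const.mul (continuous_d_inv' hr ξ)
  have hBcont : Continuous B := by
    apply continuous_of_dominated (bound := fun _ => (1 - r)⁻¹)
    · intro z
      exact (continuous_d_inv hr z).aestronglyMeasurable
    · intro z
      filter_upwards with ξ
      exact norm_d_inv_le hr ξ z
    · exact integrable_const _
    · filter_upwards with ξ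
      exact continuous_d_inv' hr ξ
  have heq : cauchyAvg μ (fun z => ((φ z : ℝ) : ℂ)) r = fun z => A z - (φ z : ℂ) * B z := by
    funext z
    unfold cauchyAvg
    have h1 : Integrable (fun ξ => (φ ξ : ℂ) *
        ((1 : ℂ) - (r : ℂ) * conj (ξ : ℂ) * (z : ℂ))⁻¹) μ := by
      have := hint.ofReal.bdd_mul ((continuous_d_inv hr z).aestronglyMeasurable)
        (Filter.Eventually.of_forall fun ξ => norm_d_inv_le hr ξ z)
      simpa [mul_comm] using this
    have h2 : Integrable (fun ξ : Circle =>
        ((1 : ℂ) - (r : ℂ) * conj (ξ : ℂ) * (z : ℂ))⁻¹) μ :=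
      ⟨(continuous_d_inv hr z).aestronglyMeasurable,
        HasFiniteIntegral.of_bounded
          (Filter.Eventually.of_forall fun ξ => norm_d_inv_le hr ξ z)⟩
    simp_rw [div_eq_mul_inv, sub_mul]
    rw [integral_sub h1 ((h2.const_mul _))]
    simp [hA, hB, integral_const_mul]
  rw [heq]
  exact hAcont.aestronglyMeasurable.sub
    ((Complex.continuous_ofReal.comp_aestronglyMeasurable hφ.1).mul
      hBcont.aestronglyMeasurable)

lemma eLpNorm_sub_mean_le (hφ : MemLp φ 2 μ) :
    eLpNorm (fun z => φ z - ∫ ξ, φ ξ ∂μ) 2 μ ≤ eLpNorm φ 2 μ := by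
  set m := ∫ ξ, φ ξ ∂μ with hm
  have hint : Integrable φ μ := hφ.integrable one_le_two
  have hsq : Integrable (fun z => φ z ^ 2) μ := by
    simpa [sq] using hφ.integrable_sq
  have hsub : MemLp (fun z => φ z - m) 2 μ := hφ.sub (memLp_const m)
  have hsubsq : Integrable (fun z => (φ z - m) ^ 2) μ := by
    simpa [sq] using hsub.integrable_sq
  have hreal : ∫ z, (φ z - m) ^ 2 ∂μ ≤ ∫ z, φ z ^ 2 ∂μ := by
    have hexp : ∀ z : Circle, (φ z - m) ^ 2 = φ z ^ 2 - 2 * m * φ z + m ^ 2 := by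
      intro z; ring
    simp_rw [hexp]
    have ha : Integrable (fun z => φ z ^ 2 - 2 * m * φ z) μ := by
      exact hsq.sub (hint.const_mul (2 * m))
    rw [integral_add ha (integrable_const _),
      integral_sub hsq (hint.const_mul _), integral_const_mul, integral_const]
    simp only [measure_univ, probReal_univ, ENNReal.toReal_one, smul_eq_mul, one_mul, ← hm]
    nlinarith [sq_nonneg m]
  have hpt : ∀ x : ℝ, ((‖x‖₊ : ℝ≥0∞)) ^ (2 : ℝ) = ENNReal.ofReal (x ^ 2) := by
    intro x
    rw [← enorm_eq_nnnorm, ← ofReal_norm,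
      ENNReal.ofReal_rpow_of_nonneg (norm_nonneg _) (by norm_num)]
    congr 1
    rw [(by norm_num : (2 : ℝ) = ((2 : ℕ) : ℝ)), Real.rpow_natCast, Real.norm_eq_abs, sq_abs]
  have hconv : ∀ f : Circle → ℝ, Integrable (fun z => f z ^ 2) μ →
      ∫⁻ z, ((‖f z‖₊ : ℝ≥0∞)) ^ (2 : ℝ) ∂μ = ENNReal.ofReal (∫ z, f z ^ 2 ∂μ) := by
    intro f hf
    rw [ofReal_integral_eq_lintegral_ofReal hf
      (Filter.Eventually.of_forall fun z => sq_nonneg _)]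
    exact lintegral_congr fun z => hpt (f z)
  rw [eLpNorm_eq_lintegral_rpow_enorm_toReal two_ne_zero ENNReal.ofNat_ne_top,
    eLpNorm_eq_lintegral_rpow_enorm_toReal two_ne_zero ENNReal.ofNat_ne_top]
  simp only [ENNReal.toReal_ofNat, enorm_eq_nnnorm]
  rw [hconv _ hsubsq, hconv φ hsq]
  exact ENNReal.rpow_le_rpow (ENNReal.ofReal_le_ofReal hreal) (by norm_num)

end PoissonCauchyAux

/-- For a Borel probability measure `μ` on the circle and a
real-valued `φ ∈ L²(μ)`, for every `r ∈ (0,1)` one has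
`‖P_r φ‖_{L²(μ)} ≤ 2 ‖C_r φ‖_{L²(μ)} + ‖φ‖_{L²(μ)}`. -/
theorem poisson_average_norm_le_cauchy_average_norm
    (μ : Measure Circle) [IsProbabilityMeasure μ]
    (φ : Circle → ℝ) (hφ : MemLp φ 2 μ)
    (r : ℝ) (hr : r ∈ Set.Ioo (0 : ℝ) 1) :
    eLpNorm (poissonAvg μ φ r) 2 μ
      ≤ 2 * eLpNorm (cauchyAvg μ (fun z => ((φ z : ℝ) : ℂ)) r) 2 μ
        + eLpNorm φ 2 μ := by
  classical
  set C := cauchyAvg μ (fun z => ((φ z : ℝ) : ℂ)) r with hCdef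
  set m := ∫ ξ, φ ξ ∂μ with hm
  have hP : poissonAvg μ φ r = (fun z => 2 * (C z).re) + (fun z => φ z - m) := by
    funext z
    exact PoissonCauchyAux.poisson_eq hφ hr z
  rw [hP]
  have hCm : AEStronglyMeasurable C μ := PoissonCauchyAux.cauchy_aesm hφ hr
  have h1 : eLpNorm ((fun z => 2 * (C z).re) + fun z => φ z - m) 2 μ
      ≤ eLpNorm (fun z => 2 * (C z).re) 2 μ + eLpNorm (fun z => φ z - m) 2 μ := by
    apply eLpNorm_add_le _ _ one_le_two
    · exact (Complex.continuous_re.comp_aestronglyMeasurable hCm).const_mul 2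
    · exact hφ.1.sub aestronglyMeasurable_const
  refine h1.trans (add_le_add ?_ (PoissonCauchyAux.eLpNorm_sub_mean_le hφ))
  have h2 : eLpNorm (fun z => 2 * (C z).re) 2 μ = 2 * eLpNorm (fun z => (C z).re) 2 μ := by
    have := eLpNorm_const_smul (2 : ℝ) (fun z => (C z).re) 2 μ
    have h2e : ‖(2 : ℝ)‖ₑ = 2 := by simpa using Real.enorm_natCast 2
    simpa [smul_eq_mul, Pi.smul_def, h2e] using this
  rw [h2]
  gcongr
  apply eLpNorm_mono
  intro z
  rw [Real.norm_eq_abs]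
  exact Complex.abs_re_le_norm (C z)
end
end

section
/- Let {p_{α,n}} (α ∈ E, n ∈ ℕ) be an s-regular summation method. Then for every complex number z with |z| = 1 and z ≠ 1, the net α ↦ Σ_{n=0}^∞ p_{α,n} z^{n} converges to 0 along the atTop filter on E. -/
open MeasureTheory Filter Topology ComplexConjugate

noncomputable section

set_option maxHeartbeats 1000000 in
/-- An s-regular summation method averages every nonconstant
unimodular geometric progression to zero: for `|z| = 1`, `z ≠ 1`, the averages
`Σₙ p_{α,n} zⁿ` tend to `0` along `atTop` on `E`. -/
theorem sregular_averages_unimodular_geometric_to_zero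
    {E : Type*} [LinearOrder E] [Nonempty E] (S : SRegular E)
    (z : ℂ) (hz : ‖z‖ = 1) (hz1 : z ≠ 1) :
    Tendsto (fun α => ∑' n : ℕ, (S.p α n : ℂ) * z ^ n) atTop (𝓝 0) := by
  have hz0 : (1 : ℂ) - z ≠ 0 := sub_ne_zero.mpr (Ne.symm hz1)
  set f : E → ℂ := fun α => ∑' n : ℕ, (S.p α n : ℂ) * z ^ n with hf
  have hnorm : ∀ α n, ‖(S.p α n : ℂ) * z ^ n‖ = S.p α n := by
    intro α n
    rw [norm_mul, norm_pow, hz, one_pow, mul_one, Complex.norm_real,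
      Real.norm_eq_abs, abs_of_nonneg (S.nonneg α n)]
  have hpS : ∀ α, Summable (S.p α) := fun α => (S.hasSum_one α).summable
  have hc : ∀ α, Summable (fun n => (S.p α n : ℂ) * z ^ n) := by
    intro α
    refine Summable.of_norm ?_
    simpa only [hnorm α] using hpS α
  have hd : ∀ α, Summable (fun n => |S.p α (n + 1) - S.p α n|) := by
    intro α
    refine Summable.of_nonneg_of_le (fun n => abs_nonneg _)
      (fun n => ?_) (((summable_nat_add_iff 1).2 (hpS α)).add (hpS α))
    calc |S.p α (n + 1) - S.p α n| ≤ |S.p α (n + 1)| + |S.p α n| := abs_sub _ _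
      _ = S.p α (n + 1) + S.p α n := by
          rw [abs_of_nonneg (S.nonneg α _), abs_of_nonneg (S.nonneg α _)]
  have key : ∀ α, (1 - z) * f α
      = (S.p α 0 : ℂ) + ∑' n : ℕ, ((S.p α (n + 1) : ℂ) - S.p α n) * z ^ (n + 1) := by
    intro α
    have h1 : f α = (S.p α 0 : ℂ) * z ^ 0 + ∑' n : ℕ, (S.p α (n + 1) : ℂ) * z ^ (n + 1) :=
      Summable.tsum_eq_zero_add (hc α)
    have h2 : z * f α = ∑' n : ℕ, z * ((S.p α n : ℂ) * z ^ n) :=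
      (Summable.tsum_mul_left z (hc α)).symm
    have hs1 : Summable (fun n : ℕ => (S.p α (n + 1) : ℂ) * z ^ (n + 1)) :=
      (summable_nat_add_iff 1).2 (hc α)
    have hs2 : Summable (fun n : ℕ => z * ((S.p α n : ℂ) * z ^ n)) := (hc α).mul_left z
    calc (1 - z) * f α = f α - z * f α := by ring
      _ = (S.p α 0 : ℂ) * z ^ 0 + (∑' n : ℕ, (S.p α (n + 1) : ℂ) * z ^ (n + 1)
            - ∑' n : ℕ, z * ((S.p α n : ℂ) * z ^ n)) := by rw [h2, h1]; ring
      _ = (S.p α 0 : ℂ)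
            + ∑' n : ℕ, ((S.p α (n + 1) : ℂ) * z ^ (n + 1) - z * ((S.p α n : ℂ) * z ^ n)) := by
          rw [Summable.tsum_sub hs1 hs2, pow_zero, mul_one]
      _ = (S.p α 0 : ℂ) + ∑' n : ℕ, ((S.p α (n + 1) : ℂ) - S.p α n) * z ^ (n + 1) := by
          congr 1
          refine tsum_congr fun n => ?_
          rw [pow_succ]
          ring
  have hbound : ∀ α, ‖(1 - z) * f α‖ ≤ S.p α 0 + ∑' n : ℕ, |S.p α n - S.p α (n + 1)| := by
    intro α
    rw [key α]
    refine (norm_add_le _ _).trans ?_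
    have h0 : ‖(S.p α 0 : ℂ)‖ = S.p α 0 := by
      rw [Complex.norm_real, Real.norm_eq_abs, abs_of_nonneg (S.nonneg α 0)]
    have hnn : ∀ n : ℕ, ‖((S.p α (n + 1) : ℂ) - S.p α n) * z ^ (n + 1)‖
        = |S.p α n - S.p α (n + 1)| := by
      intro n
      rw [norm_mul, norm_pow, hz, one_pow, mul_one, ← Complex.ofReal_sub,
        Complex.norm_real, Real.norm_eq_abs, abs_sub_comm]
    have hsum : Summable (fun n : ℕ => ‖((S.p α (n + 1) : ℂ) - S.p α n) * z ^ (n + 1)‖) := by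
      simp only [hnn]; exact (hd α).congr fun n => abs_sub_comm _ _
    calc ‖(S.p α 0 : ℂ)‖ + ‖∑' n : ℕ, ((S.p α (n + 1) : ℂ) - S.p α n) * z ^ (n + 1)‖
        ≤ S.p α 0 + ∑' n : ℕ, ‖((S.p α (n + 1) : ℂ) - S.p α n) * z ^ (n + 1)‖ := by
          gcongr
          · rw [h0]
          · exact norm_tsum_le_tsum_norm hsum
      _ = S.p α 0 + ∑' n : ℕ, |S.p α n - S.p α (n + 1)| := by
          rw [tsum_congr hnn]
  have hnormtendsto : Tendsto (fun α => ‖(1 - z) * f α‖) atTop (𝓝 0) := by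
    refine squeeze_zero (fun α => norm_nonneg _) hbound ?_
    simpa using (S.tendsto_eval 0).add S.tendsto_variation
  have hmul : Tendsto (fun α => (1 - z) * f α) atTop (𝓝 0) :=
    tendsto_zero_iff_norm_tendsto_zero.mpr hnormtendsto
  have : Tendsto (fun α => (1 - z)⁻¹ * ((1 - z) * f α)) atTop (𝓝 ((1 - z)⁻¹ * 0)) :=
    hmul.const_mul _
  simpa [inv_mul_cancel_left₀ hz0] using this
end
end

section
/- Let {p_{α,n}} (α ∈ E, n ∈ ℕ) be an s-regular summation method, X a complex Banach space, and {x_n} a norm-bounded sequence in X. Then the averages Σ_{n=0}^∞ p_{α,n} x_n converge in norm along atTop on E to some x ∈ X if and only if the averages Σ_{n=0}^∞ p_{α,n} x_{n+1} converge in norm along atTop on E, and in that case the two limits coincide. -/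
open MeasureTheory Filter Topology ComplexConjugate

noncomputable section

/-- Stability of s-regular summation methods: for a norm-bounded
sequence `xₙ` in a complex Banach space, the averages `Σₙ p_{α,n} xₙ` converge in
norm along `atTop` iff the averages `Σₙ p_{α,n} x_{n+1}` do, and the limits then
coincide. -/
theorem sregular_method_is_stable
    {E : Type*} [LinearOrder E] [Nonempty E] (S : SRegular E)
    {X : Type*} [NormedAddCommGroup X] [NormedSpace ℂ X] [CompleteSpace X]
    (x : ℕ → X) (hbdd : ∃ C : ℝ, ∀ n, ‖x n‖ ≤ C) :
    ((∃ y : X, Tendsto (fun α => ∑' n : ℕ, S.p α n • x n) atTop (𝓝 y)) ↔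
      (∃ y : X, Tendsto (fun α => ∑' n : ℕ, S.p α n • x (n + 1)) atTop (𝓝 y))) ∧
    (∀ y₁ y₂ : X, Tendsto (fun α => ∑' n : ℕ, S.p α n • x n) atTop (𝓝 y₁) →
      Tendsto (fun α => ∑' n : ℕ, S.p α n • x (n + 1)) atTop (𝓝 y₂) → y₁ = y₂) := by
  obtain ⟨C, hC⟩ := hbdd
  have hC0 : 0 ≤ C := le_trans (norm_nonneg _) (hC 0)
  have hsp : ∀ α, Summable (S.p α) := fun α => (S.hasSum_one α).summable
  have hsx : ∀ α (f : ℕ → X), (∀ n, ‖f n‖ ≤ C) → Summable (fun n => S.p α n • f n) := by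
    intro α f hf
    apply Summable.of_norm
    refine Summable.of_nonneg_of_le (fun n => norm_nonneg _) (fun n => ?_)
      ((hsp α).mul_right C)
    rw [norm_smul, Real.norm_eq_abs, abs_of_nonneg (S.nonneg α n)]
    exact mul_le_mul_of_nonneg_left (hf n) (S.nonneg α n)
  have h1 : ∀ α, Summable (fun n => S.p α n • x n) := fun α => hsx α x hC
  have h2 : ∀ α, Summable (fun n => S.p α n • x (n + 1)) :=
    fun α => hsx α _ (fun n => hC _)
  have h3 : ∀ α, Summable (fun n => S.p α (n + 1) • x (n + 1)) :=
    fun α => (summable_nat_add_iff 1).2 (h1 α)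
  have hdq : ∀ α, Summable (fun n => |S.p α n - S.p α (n + 1)|) := by
    intro α
    refine Summable.of_nonneg_of_le (fun n => abs_nonneg _) (fun n => ?_)
      ((hsp α).add ((summable_nat_add_iff 1).2 (hsp α)))
    have h1 := S.nonneg α n
    have h2 := S.nonneg α (n + 1)
    rw [abs_le]
    constructor <;> linarith
  -- the key identity
  have key : ∀ α, (∑' n, S.p α n • x n) - (∑' n, S.p α n • x (n + 1))
      = S.p α 0 • x 0 - ∑' n, (S.p α n - S.p α (n + 1)) • x (n + 1) := by
    intro α
    have e1 : (∑' n, S.p α n • x n)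
        = S.p α 0 • x 0 + ∑' n, S.p α (n + 1) • x (n + 1) :=
      Summable.tsum_eq_zero_add (h1 α)
    have e2 : (∑' n, (S.p α n - S.p α (n + 1)) • x (n + 1))
        = (∑' n, S.p α n • x (n + 1)) - ∑' n, S.p α (n + 1) • x (n + 1) := by
      rw [← Summable.tsum_sub (h2 α) (h3 α)]
      congr 1
      funext n
      rw [sub_smul]
    rw [e1, e2]
    abel
  -- norm bound
  have bound : ∀ α, ‖(∑' n, S.p α n • x n) - (∑' n, S.p α n • x (n + 1))‖
      ≤ S.p α 0 * C + (∑' n, |S.p α n - S.p α (n + 1)|) * C := by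
    intro α
    rw [key α]
    refine (norm_sub_le _ _).trans (add_le_add ?_ ?_)
    · rw [norm_smul, Real.norm_eq_abs, abs_of_nonneg (S.nonneg α 0)]
      exact mul_le_mul_of_nonneg_left (hC 0) (S.nonneg α 0)
    · have hsn : Summable (fun n => |S.p α n - S.p α (n + 1)| * C) :=
        (hdq α).mul_right C
      calc ‖∑' n, (S.p α n - S.p α (n + 1)) • x (n + 1)‖
          ≤ ∑' n, ‖(S.p α n - S.p α (n + 1)) • x (n + 1)‖ := by
            refine norm_tsum_le_tsum_norm ?_
            refine Summable.of_nonneg_of_le (fun n => norm_nonneg _) (fun n => ?_) hsn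
            rw [norm_smul, Real.norm_eq_abs]
            exact mul_le_mul_of_nonneg_left (hC _) (abs_nonneg _)
        _ ≤ ∑' n, |S.p α n - S.p α (n + 1)| * C := by
            refine Summable.tsum_le_tsum (fun n => ?_) ?_ hsn
            · rw [norm_smul, Real.norm_eq_abs]
              exact mul_le_mul_of_nonneg_left (hC _) (abs_nonneg _)
            · refine Summable.of_nonneg_of_le (fun n => norm_nonneg _) (fun n => ?_) hsn
              rw [norm_smul, Real.norm_eq_abs]
              exact mul_le_mul_of_nonneg_left (hC _) (abs_nonneg _)
        _ = (∑' n, |S.p α n - S.p α (n + 1)|) * C := tsum_mul_right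
  -- the difference tends to zero
  have hg : Tendsto (fun α => S.p α 0 * C + (∑' n, |S.p α n - S.p α (n + 1)|) * C)
      atTop (𝓝 0) := by
    have := ((S.tendsto_eval 0).mul_const C).add (S.tendsto_variation.mul_const C)
    simpa using this
  have hd0 : Tendsto (fun α => (∑' n, S.p α n • x n) - (∑' n, S.p α n • x (n + 1)))
      atTop (𝓝 0) := squeeze_zero_norm bound hg
  constructor
  · constructor
    · rintro ⟨y, hy⟩
      exact ⟨y, by simpa using hy.sub hd0⟩
    · rintro ⟨y, hy⟩
      exact ⟨y, by simpa using hd0.add hy⟩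
  · intro y₁ y₂ hA hB
    have hB' : Tendsto (fun α => ∑' n : ℕ, S.p α n • x (n + 1)) atTop (𝓝 y₁) := by
      simpa using hA.sub hd0
    exact tendsto_nhds_unique hB' hB
end
end

section
/- Let H be a complex Hilbert space, U a unitary operator on H, A a bounded operator on H, and {p_{α,n}} an s-regular summation method; let W₊(α) = Σ_{n=0}^∞ p_{α,n} U^{−n}AU^{n}. Then for every α ∈ E with Σ_{n=0}^∞ |p_{α,n} − p_{α,n+1}| < ∞, one has U^{−1} W₊(α) U = W₊(α) − p_{α,0}·A + Σ_{n=0}^∞ (p_{α,n} − p_{α,n+1})·U^{−n−1} A U^{n+1}, where the series on the right converges absolutely in operator norm. -/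
open MeasureTheory Filter Topology ComplexConjugate

noncomputable section

section Aux

variable {H : Type*} [NormedAddCommGroup H] [InnerProductSpace ℂ H] [CompleteSpace H]

/-- Auxiliary: the conjugated operator `U^{-k} A U^{k}`. -/
def Tk (U : unitary (H →L[ℂ] H)) (A : H →L[ℂ] H) (k : ℤ) : H →L[ℂ] H :=
  ((U ^ (-k) : unitary (H →L[ℂ] H)) : H →L[ℂ] H) * A *
    ((U ^ k : unitary (H →L[ℂ] H)) : H →L[ℂ] H)

lemma Tk_norm (U : unitary (H →L[ℂ] H)) (A : H →L[ℂ] H) (k : ℤ) : ‖Tk U A k‖ = ‖A‖ := by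
  unfold Tk
  rw [CStarRing.norm_mul_coe_unitary, CStarRing.norm_coe_unitary_mul]

lemma Tk_zero (U : unitary (H →L[ℂ] H)) (A : H →L[ℂ] H) : Tk U A 0 = A := by
  unfold Tk
  rw [neg_zero, zpow_zero, OneMemClass.coe_one, one_mul, mul_one]

lemma Tk_conj (U : unitary (H →L[ℂ] H)) (A : H →L[ℂ] H) (k : ℤ) :
    ((U⁻¹ : unitary (H →L[ℂ] H)) : H →L[ℂ] H) * Tk U A k * (U : H →L[ℂ] H)
      = Tk U A (k + 1) := by
  have h1 : ((U⁻¹ : unitary (H →L[ℂ] H)) : H →L[ℂ] H) *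
      ((U ^ (-k) : unitary (H →L[ℂ] H)) : H →L[ℂ] H)
      = ((U ^ (-(k + 1)) : unitary (H →L[ℂ] H)) : H →L[ℂ] H) := by
    rw [← Submonoid.coe_mul]
    congr 1
    rw [← zpow_neg_one, ← zpow_add]
    congr 1
    ring
  have h2 : ((U ^ k : unitary (H →L[ℂ] H)) : H →L[ℂ] H) * (U : H →L[ℂ] H)
      = ((U ^ (k + 1) : unitary (H →L[ℂ] H)) : H →L[ℂ] H) := by
    rw [← Submonoid.coe_mul]
    congr 1
    exact (zpow_add_one U k).symm
  unfold Tk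
  simp only [mul_assoc]
  rw [h2, ← mul_assoc, h1]

end Aux

/-- For a unitary `U` and bounded `A` on a complex Hilbert space and
an s-regular summation method, for every `α` with `Σₙ |p_{α,n} - p_{α,n+1}| < ∞`, the
series `Σₙ (p_{α,n} - p_{α,n+1}) U^{-n-1} A U^{n+1}` converges absolutely in operator
norm and `U⁻¹ W₊(α) U = W₊(α) - p_{α,0} A + Σₙ (p_{α,n} - p_{α,n+1}) U^{-n-1} A U^{n+1}`. -/
theorem conjugated_future_wave_operator_formula
    {E : Type*} [LinearOrder E] [Nonempty E] (S : SRegular E)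
    {H : Type*} [NormedAddCommGroup H] [InnerProductSpace ℂ H] [CompleteSpace H]
    (U : unitary (H →L[ℂ] H)) (A : H →L[ℂ] H) (α : E)
    (hvar : Summable fun n : ℕ => |S.p α n - S.p α (n + 1)|) :
    Summable (fun n : ℕ => ‖(S.p α n - S.p α (n + 1)) •
      (((U ^ (-((n : ℤ) + 1)) : unitary (H →L[ℂ] H)) : H →L[ℂ] H) ∘L A ∘L
        ((U ^ ((n : ℤ) + 1) : unitary (H →L[ℂ] H)) : H →L[ℂ] H))‖) ∧
    ((U⁻¹ : unitary (H →L[ℂ] H)) : H →L[ℂ] H) ∘L Wplus S U A α ∘L (U : H →L[ℂ] H)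
      = Wplus S U A α - S.p α 0 • A
        + ∑' n : ℕ, (S.p α n - S.p α (n + 1)) •
            (((U ^ (-((n : ℤ) + 1)) : unitary (H →L[ℂ] H)) : H →L[ℂ] H) ∘L A ∘L
              ((U ^ ((n : ℤ) + 1) : unitary (H →L[ℂ] H)) : H →L[ℂ] H)) := by
  have hpsum : Summable (S.p α) := (S.hasSum_one α).summable
  have hs1 : Summable (fun n : ℕ => S.p α n • Tk U A n) := by
    refine Summable.of_norm_bounded (hpsum.mul_right ‖A‖) ?_
    intro n
    rw [norm_smul, Tk_norm, Real.norm_eq_abs, abs_of_nonneg (S.nonneg α n)]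
  have hs2 : Summable (fun n : ℕ => (S.p α n - S.p α (n + 1)) • Tk U A ((n : ℤ) + 1)) := by
    refine Summable.of_norm_bounded (hvar.mul_right ‖A‖) ?_
    intro n
    rw [norm_smul, Tk_norm, Real.norm_eq_abs]
  have hfun : (fun n : ℕ => S.p α (n + 1) • Tk U A ((n : ℤ) + 1))
      = fun n : ℕ => S.p α (n + 1) • Tk U A (((n + 1 : ℕ) : ℤ)) := by
    funext n
    norm_cast
  have hs3 : Summable (fun n : ℕ => S.p α (n + 1) • Tk U A ((n : ℤ) + 1)) := by
    rw [hfun]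
    exact (summable_nat_add_iff (f := fun n : ℕ => S.p α n • Tk U A n) 1).2 hs1
  have hWplus : Wplus S U A α = ∑' n : ℕ, S.p α n • Tk U A n := rfl
  have key : ((U⁻¹ : unitary (H →L[ℂ] H)) : H →L[ℂ] H) * Wplus S U A α * (U : H →L[ℂ] H)
      = ∑' n : ℕ, S.p α n • Tk U A ((n : ℤ) + 1) := by
    rw [hWplus, ← Summable.tsum_mul_left _ hs1,
      ← Summable.tsum_mul_right _ (hs1.mul_left _)]
    congr 1
    funext n
    rw [mul_smul_comm, smul_mul_assoc, Tk_conj]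
  have hsplit : (fun n : ℕ => S.p α n • Tk U A ((n : ℤ) + 1))
      = fun n : ℕ => S.p α (n + 1) • Tk U A ((n : ℤ) + 1)
        + (S.p α n - S.p α (n + 1)) • Tk U A ((n : ℤ) + 1) := by
    funext n
    rw [← add_smul]
    ring_nf
  have hshift : ∑' n : ℕ, S.p α (n + 1) • Tk U A ((n : ℤ) + 1)
      = Wplus S U A α - S.p α 0 • A := by
    rw [hWplus, hfun, Summable.tsum_eq_zero_add hs1, Nat.cast_zero, Tk_zero]
    abel
  constructor
  · refine Summable.of_nonneg_of_le (fun n => norm_nonneg _) (fun n => ?_)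
      (hvar.mul_right ‖A‖)
    show ‖(S.p α n - S.p α (n + 1)) • Tk U A ((n : ℤ) + 1)‖ ≤ _
    rw [norm_smul, Tk_norm, Real.norm_eq_abs]
  · show ((U⁻¹ : unitary (H →L[ℂ] H)) : H →L[ℂ] H) * Wplus S U A α * (U : H →L[ℂ] H)
      = Wplus S U A α - S.p α 0 • A
        + ∑' n : ℕ, (S.p α n - S.p α (n + 1)) • Tk U A ((n : ℤ) + 1)
    rw [key, hsplit, Summable.tsum_add hs3 hs2, hshift]
end
end
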